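/- arXiv:2510.00792 — 3 statements merged into one kernel-verified Lean document; each statement's English description precedes it below -/
import Mathlib

section
/- Let (R,μ) be a σ-finite nonatomic measure space with μ(R) = ∞. Then the space L^∞₀(R,μ) is not Fatou-representable: there is no rearrangement-invariant quasi-Banach lattice X̄ over (0,∞) (with Lebesgue measure) having the weak Fatou property such that ‖f‖_{L^∞₀} = ‖f*‖_{X̄} for every measurable function f on (R,μ), where ‖f‖_{L^∞₀} equals the essential supremum of |f| if f ∈ L^∞₀ and equals ∞ otherwise. -/
open MeasureTheory Set Filter
open scoped ENNReal NNReal Classical Topology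

noncomputable section

variable {α β : Type*} [MeasurableSpace α] [MeasurableSpace β]

/-- The nonincreasing rearrangement `f*` of `f`, as a function of `t : ℝ≥0∞`:
`f*(t) = inf {λ : μ(|f| > λ) ≤ t}`. -/
def rearr (μ : Measure α) (f : α → ℝ) (t : ℝ≥0∞) : ℝ≥0∞ :=
  sInf {l : ℝ≥0∞ | μ {x | l < (‖f x‖₊ : ℝ≥0∞)} ≤ t}

/-- The nonincreasing rearrangement as a real-valued function on `(0,∞) ⊆ ℝ`. -/
def rearrFun (μ : Measure α) (f : α → ℝ) (t : ℝ) : ℝ :=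
  (rearr μ f (ENNReal.ofReal t)).toReal

/-- A quasi-Banach lattice over `(α, μ)`: the collection of (a.e.-classes of) measurable
functions `f` with `N f < ∞`, where the functional `N` (extended by `∞` outside the space)
is a quasi-norm with the lattice property, and the space is complete. -/
structure QBLattice (μ : Measure α) where
  N : (α → ℝ) → ℝ≥0∞
  zero : N (fun _ => 0) = 0
  eq_zero : ∀ f : α → ℝ, AEMeasurable f μ → N f = 0 → f =ᵐ[μ] 0
  mem_aemeasurable : ∀ f : α → ℝ, N f < ⊤ → AEMeasurable f μ
  smul : ∀ (c : ℝ) (f : α → ℝ), N f < ⊤ → N (fun x => c * f x) = ENNReal.ofReal |c| * N f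
  quasi_triangle : ∃ K : ℝ≥0, 1 ≤ K ∧
    ∀ f g : α → ℝ, N (fun x => f x + g x) ≤ K * (N f + N g)
  lattice : ∀ f g : α → ℝ, AEMeasurable f μ → (∀ᵐ x ∂μ, |f x| ≤ |g x|) → N f ≤ N g
  complete : ∀ F : ℕ → α → ℝ, (∀ k, N (F k) < ⊤) →
    (∀ ε : ℝ≥0∞, 0 < ε → ∃ k₀ : ℕ, ∀ m k, k₀ ≤ m → k₀ ≤ k →
      N (fun x => F m x - F k x) < ε) →
    ∃ g : α → ℝ, N g < ⊤ ∧ Tendsto (fun k => N (fun x => F k x - g x)) atTop (nhds 0)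

/-- A quasi-Banach lattice is rearrangement-invariant if its functional only depends on the
nonincreasing rearrangement. -/
def QBLattice.RearrInv {μ : Measure α} (X : QBLattice μ) : Prop :=
  ∀ f g : α → ℝ, rearr μ f = rearr μ g → X.N f = X.N g

/-- The fundamental function of a (rearrangement-invariant) quasi-Banach lattice:
the common value of the quasi-norm on characteristic functions of sets of measure `t`. -/
def QBLattice.fund {μ : Measure α} (X : QBLattice μ) (t : ℝ≥0∞) : ℝ≥0∞ :=
  ⨅ (E : Set α) (_ : MeasurableSet E) (_ : μ E = t), X.N (E.indicator fun _ => (1 : ℝ))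

/-- The underlying set of a quasi-Banach lattice. -/
def QBLattice.carrier {μ : Measure α} (X : QBLattice μ) : Set (α → ℝ) :=
  {f | X.N f < ⊤}

/-- A `μ`-simple function written with positive coefficients and nested measurable sets of
finite measure. -/
def NestedSimple (μ : Measure α) (s : α → ℝ) : Prop :=
  ∃ (N : ℕ) (a : Fin N → ℝ) (E : Fin N → Set α),
    (∀ k, 0 < a k) ∧ (∀ k, MeasurableSet (E k)) ∧ (∀ k, μ (E k) < ⊤) ∧
    (∀ j k, j ≤ k → E j ⊆ E k) ∧
    s = fun x => ∑ k, a k * (E k).indicator (fun _ => (1 : ℝ)) x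

/-- The measure space is nonatomic. -/
def Nonatomic (μ : Measure α) : Prop :=
  ∀ s : Set α, MeasurableSet s → 0 < μ s →
    ∃ t ⊆ s, MeasurableSet t ∧ 0 < μ t ∧ μ t < μ s

/-- Continuous embedding `X ↪ Y` of quasi-Banach lattices. -/
def Embeds {μ : Measure α} (X Y : QBLattice μ) : Prop :=
  ∃ C : ℝ≥0, ∀ f : α → ℝ, Y.N f ≤ C * X.N f

/-- Boundedness of an operator `T : X → Y`. -/
def OpBounded {μ : Measure α} {ν : Measure β} (T : (α → ℝ) → β → ℝ)
    (X : QBLattice μ) (Y : QBLattice ν) : Prop :=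
  ∃ C : ℝ≥0, ∀ f : α → ℝ, Y.N (T f) ≤ C * X.N f

/-- `Y` is the optimal target for `(T, X, 𝓒)`. -/
def OptimalTarget {μ : Measure α} {ν : Measure β} (T : (α → ℝ) → β → ℝ)
    (X : QBLattice μ) (𝓒 : Set (QBLattice ν)) (Y : QBLattice ν) : Prop :=
  OpBounded T X Y ∧ ∀ Z ∈ 𝓒, OpBounded T X Z → Embeds Y Z

/-- A quasi-Banach lattice is normable if its quasi-norm is equivalent to a norm. -/
def Normable {μ : Measure α} (X : QBLattice μ) : Prop :=
  ∃ n : (α → ℝ) → ℝ≥0∞,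
    (∀ f g : α → ℝ, n (fun x => f x + g x) ≤ n f + n g) ∧
    (∀ (c : ℝ) (f : α → ℝ), n f < ⊤ → n (fun x => c * f x) = ENNReal.ofReal |c| * n f) ∧
    ∃ C : ℝ≥0, 0 < C ∧ ∀ f : α → ℝ, n f ≤ C * X.N f ∧ X.N f ≤ C * n f

/-- `T` is a sublinear operator defined on `X` with values in the (ν-a.e. finite)
measurable functions. -/
def SublinearOn {μ : Measure α} (ν : Measure β) (T : (α → ℝ) → β → ℝ)
    (X : QBLattice μ) : Prop :=
  (∀ f : α → ℝ, X.N f < ⊤ → AEMeasurable (T f) ν) ∧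
  (∀ f g : α → ℝ, X.N f < ⊤ → X.N g < ⊤ →
    ∀ᵐ y ∂ν, |T (fun x => f x + g x) y| ≤ |T f y| + |T g y|) ∧
  (∀ (c : ℝ) (f : α → ℝ), X.N f < ⊤ →
    ∀ᵐ y ∂ν, |T (fun x => c * f x) y| = |c| * |T f y|)

/-- `T` is simply approximable from above in the compatible triple `(T, X, 𝓒)`. -/
def SimplyApproxAbove {μ : Measure α} {ν : Measure β} (T : (α → ℝ) → β → ℝ)
    (X : QBLattice μ) (𝓒 : Set (QBLattice ν)) : Prop :=
  (∀ s : α → ℝ, NestedSimple μ s → X.N s < ⊤) ∧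
  ∃ S : (α → ℝ) → ℕ → α → ℝ,
    (∀ f : α → ℝ, X.N f < ⊤ → (∀ j, NestedSimple μ (S f j)) ∧
      Filter.limsup (fun j => X.N (S f j)) atTop ≤ X.N f) ∧
    ∀ Y ∈ 𝓒, ∃ C : ℝ≥0, 0 < C ∧ ∀ f : α → ℝ, X.N f < ⊤ →
      Y.N (T f) ≤ C * Filter.limsup (fun j => Y.N (T (S f j))) atTop

/-- The domain `[0, μ(R))` of the fundamental-type functions, as a subset of `ℝ`. -/
def edom (μ : Measure α) : Set ℝ :=
  {t : ℝ | 0 ≤ t ∧ ENNReal.ofReal t < μ Set.univ}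

/-- The Lorentz endpoint functional `‖f‖_{Λ_φ} = ∫₀^{μ(R)} f*(t) dφ(t)`
(a Lebesgue–Stieltjes integral). -/
def lorentzEndpoint (μ : Measure α) (φ : StieltjesFunction ℝ) (f : α → ℝ) : ℝ≥0∞ :=
  ∫⁻ t in edom μ, rearr μ f (ENNReal.ofReal t) ∂φ.measure

/-- The weak Fatou property with constant `C`. -/
def WeakFatouC {μ : Measure α} (Z : QBLattice μ) (C : ℝ≥0) : Prop :=
  ∀ (g : ℕ → α → ℝ) (f : α → ℝ), (∀ k, AEMeasurable (g k) μ) →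
    (∀ k, ∀ᵐ x ∂μ, 0 ≤ g k x ∧ g k x ≤ g (k + 1) x) →
    (∀ᵐ x ∂μ, Tendsto (fun k => g k x) atTop (nhds (f x))) →
    (⨆ k, Z.N (g k)) < ⊤ → Z.N f ≤ C * ⨆ k, Z.N (g k)

/-- The weak Fatou property. -/
def WeakFatou {μ : Measure α} (Z : QBLattice μ) : Prop :=
  ∃ C : ℝ≥0, 0 < C ∧ WeakFatouC Z C

/-- Lebesgue measure on the interval `(0, c) ⊆ ℝ` (equal to `(0,∞)` when `c = ∞`). -/
def intervalM (c : ℝ≥0∞) : Measure ℝ :=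
  (volume : Measure ℝ).restrict {t : ℝ | 0 < t ∧ ENNReal.ofReal t < c}

/-- A rearrangement-invariant quasi-Banach lattice `Y` over `(β, ν)` is Fatou-representable
if there is a rearrangement-invariant quasi-Banach lattice over `(0, ν(S))` with the weak
Fatou property representing the functional of `Y` via `‖f‖_Y = ‖f*‖_{Ȳ}`. -/
def FatouRepresentable {ν : Measure β} (Y : QBLattice ν) : Prop :=
  ∃ Ybar : QBLattice (intervalM (ν Set.univ)),
    Ybar.RearrInv ∧ WeakFatou Ybar ∧ ∀ f : β → ℝ, Y.N f = Ybar.N (rearrFun ν f)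

/-- The weak Lorentz functional `‖f‖_{q,∞}`; for `q = ∞` this is the essential supremum. -/
def weakNorm (μ : Measure α) (q : ℝ≥0∞) (f : α → ℝ) : ℝ≥0∞ :=
  if q = ⊤ then essSup (fun x => (‖f x‖₊ : ℝ≥0∞)) μ
  else ⨆ (s : ℝ) (_ : 0 < s), ENNReal.ofReal s * μ {x | s < |f x|} ^ (1 / q).toReal

/-- The `L^∞` functional (essential supremum). -/
def linftyNorm (μ : Measure α) (f : α → ℝ) : ℝ≥0∞ :=
  essSup (fun x => (‖f x‖₊ : ℝ≥0∞)) μ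

/-- The Lorentz functional `‖f‖_{p,q}` for `p, q ∈ (0,∞)`. -/
def lorentzNorm (μ : Measure α) (p q : ℝ) (f : α → ℝ) : ℝ≥0∞ :=
  (ENNReal.ofReal p * ∫⁻ s in Set.Ioi (0 : ℝ),
    (ENNReal.ofReal s * μ {x | s < |f x|} ^ (1 / p)) ^ q * (ENNReal.ofReal s)⁻¹) ^ (1 / q)

/-- The functional of `L^∞₀`: the essential sup norm for essentially bounded functions
supported in a set of finite measure, and `∞` otherwise. -/
def Linf0 (μ : Measure α) (f : α → ℝ) : ℝ≥0∞ :=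
  if (∃ E : Set α, MeasurableSet E ∧ μ E < ⊤ ∧ ∀ᵐ x ∂μ, x ∉ E → f x = 0) ∧
      linftyNorm μ f < ⊤
  then linftyNorm μ f else ⊤

/-- The operator `R_σ g(t) = t^{-1/q} ∫₀^{t^m} g(s) s^{1/p - 1} ds` for `σ = [p,q,m]`
(with `t^{-1/q} = 1` when `q = ∞` and `s^{1/p} = 1` when `p = ∞`). -/
def Rop (p q : ℝ≥0∞) (m : ℝ) (g : ℝ → ℝ) (t : ℝ) : ℝ≥0∞ :=
  ENNReal.ofReal t ^ (-(1 / q).toReal) *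
    ∫⁻ s in Set.Ioc (0 : ℝ) (t ^ m),
      ENNReal.ofReal (g s) * ENNReal.ofReal s ^ ((1 / p).toReal - 1)

/-- The operator `S⁰_σ g(t) = t^{-1/q} sup_{0 < s ≤ t^m} g(s) s^{1/p}` for `σ = [p,q,m]`. -/
def S0op (p q : ℝ≥0∞) (m : ℝ) (g : ℝ → ℝ) (t : ℝ) : ℝ≥0∞ :=
  ENNReal.ofReal t ^ (-(1 / q).toReal) *
    ⨆ (s : ℝ) (_ : 0 < s) (_ : s ≤ t ^ m),
      ENNReal.ofReal (g s) * ENNReal.ofReal s ^ (1 / p).toReal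

/-- The operator `H_σ g(t) = t^{-1/q} ∫_{t^m}^∞ g(s) s^{1/p - 1} ds` for `σ = [p,q,m]`. -/
def Hop (p q : ℝ≥0∞) (m : ℝ) (g : ℝ → ℝ) (t : ℝ) : ℝ≥0∞ :=
  ENNReal.ofReal t ^ (-(1 / q).toReal) *
    ∫⁻ s in Set.Ioi (t ^ m),
      ENNReal.ofReal (g s) * ENNReal.ofReal s ^ ((1 / p).toReal - 1)

/-- The operator `S^∞_σ g(t) = t^{-1/q} sup_{t^m ≤ s < ∞} g(s) s^{1/p}` for `σ = [p,q,m]`. -/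
def Sinfop (p q : ℝ≥0∞) (m : ℝ) (g : ℝ → ℝ) (t : ℝ) : ℝ≥0∞ :=
  ENNReal.ofReal t ^ (-(1 / q).toReal) *
    ⨆ (s : ℝ) (_ : t ^ m ≤ s),
      ENNReal.ofReal (g s) * ENNReal.ofReal s ^ (1 / p).toReal

/-- The characteristic function of the interval `(0, a)` for `a : ℝ≥0∞`. -/
def chiInterval (a : ℝ≥0∞) : ℝ → ℝ :=
  Set.indicator {s : ℝ | 0 < s ∧ ENNReal.ofReal s < a} fun _ => 1

/-- The Riesz potential `I_γ f(x) = c_γ ∫ f(y) |x - y|^{γ - n} dy` on `ℝⁿ`. -/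
def riesz (n : ℕ) (γ : ℝ) (f : EuclideanSpace ℝ (Fin n) → ℝ)
    (x : EuclideanSpace ℝ (Fin n)) : ℝ :=
  (Real.pi ^ ((n : ℝ) / 2) * 2 ^ γ * Real.Gamma (γ / 2) / Real.Gamma (((n : ℝ) - γ) / 2)) *
    ∫ y, f y * ‖x - y‖ ^ (γ - (n : ℝ))

/-- The Hardy–Littlewood maximal operator on `ℝⁿ` (supremum over all balls containing `x`). -/
def hlMax {n : ℕ} (f : EuclideanSpace ℝ (Fin n) → ℝ) (x : EuclideanSpace ℝ (Fin n)) : ℝ :=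
  (⨆ (z : EuclideanSpace ℝ (Fin n)) (r : ℝ) (_ : 0 < r) (_ : x ∈ Metric.ball z r),
    (volume (Metric.ball z r))⁻¹ * ∫⁻ y in Metric.ball z r, (‖f y‖₊ : ℝ≥0∞)).toReal

lemma rearr_indicator_one (μ : Measure α) (E : Set α) (s : ℝ≥0∞) :
    rearr μ (E.indicator fun _ => (1 : ℝ)) s = if s < μ E then 1 else 0 := by
  have hmeas : ∀ l : ℝ≥0∞,
      μ {x | l < (‖E.indicator (fun _ => (1 : ℝ)) x‖₊ : ℝ≥0∞)}
        = if l < 1 then μ E else 0 := by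
    intro l
    split_ifs with hl
    · congr 1
      ext x
      by_cases hx : x ∈ E <;> simp [hx, hl]
    · rw [show {x | l < (‖E.indicator (fun _ => (1 : ℝ)) x‖₊ : ℝ≥0∞)} = (∅ : Set α) by
        ext x; by_cases hx : x ∈ E <;> simp [hx, hl], measure_empty]
  unfold rearr
  simp only [hmeas]
  split_ifs with hs
  · refine le_antisymm (sInf_le ?_) (le_sInf fun l hl => ?_)
    · simp only [Set.mem_setOf_eq, lt_irrefl, if_neg (lt_irrefl (1 : ℝ≥0∞))]
      exact zero_le
    · simp only [Set.mem_setOf_eq] at hl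
      by_contra hcon
      push_neg at hcon
      rw [if_pos hcon] at hl
      exact absurd hl (not_le.mpr hs)
  · refine le_antisymm (sInf_le ?_) (zero_le)
    simp only [Set.mem_setOf_eq, if_pos (zero_lt_one : (0 : ℝ≥0∞) < 1)]
    exact not_lt.mp hs

/-- if `μ(R) = ∞`, then `L^∞₀(R,μ)` is not Fatou-representable. -/
theorem Linf0_not_Fatou_representable
    {α : Type*} [MeasurableSpace α] (μ : Measure α) [SigmaFinite μ]
    (hna : Nonatomic μ) (hμ : μ Set.univ = ⊤) :
    ¬ ∃ Xbar : QBLattice (intervalM (μ Set.univ)),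
        Xbar.RearrInv ∧ WeakFatou Xbar ∧
        ∀ f : α → ℝ, Linf0 μ f = Xbar.N (rearrFun μ f) := by
  rintro ⟨Xbar, -, ⟨C, hCpos, hC⟩, hrep⟩
  set E : ℕ → Set α := spanningSets μ with hE
  set g : ℕ → ℝ → ℝ := fun k => rearrFun μ ((E k).indicator fun _ => (1 : ℝ)) with hg
  have hgk : ∀ k t, g k t = if ENNReal.ofReal t < μ (E k) then 1 else 0 := by
    intro k t
    simp only [hg, rearrFun, rearr_indicator_one]
    split_ifs <;> simp
  have hone : ∀ t : ℝ, rearrFun μ (fun _ => (1 : ℝ)) t = 1 := by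
    intro t
    have h1 : (fun _ : α => (1 : ℝ)) = Set.indicator Set.univ fun _ => (1 : ℝ) := by
      simp
    rw [rearrFun, h1, rearr_indicator_one, if_pos, ENNReal.toReal_one]
    rw [hμ]; exact ENNReal.ofReal_lt_top
  -- `L^∞₀` bounds
  have hLk : ∀ k, Linf0 μ ((E k).indicator fun _ => (1 : ℝ)) ≤ 1 := by
    intro k
    have hnorm : linftyNorm μ ((E k).indicator fun _ => (1 : ℝ)) ≤ 1 := by
      refine essSup_le_of_ae_le _ (Filter.Eventually.of_forall fun x => ?_)
      by_cases hx : x ∈ E k <;> simp [hx]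
    rw [Linf0, if_pos]
    · exact hnorm
    · exact ⟨⟨E k, measurableSet_spanningSets μ k, measure_spanningSets_lt_top μ k,
        Filter.Eventually.of_forall fun x hx => Set.indicator_of_notMem hx _⟩,
        hnorm.trans_lt ENNReal.one_lt_top⟩
  have hLtop : Linf0 μ (fun _ => (1 : ℝ)) = ⊤ := by
    rw [Linf0, if_neg]
    rintro ⟨⟨F, hF, hFfin, hae⟩, -⟩
    have h0 : μ Fᶜ = 0 := by
      have hmem : ∀ᵐ x ∂μ, x ∈ F := by
        refine hae.mono fun x hx => ?_
        by_contra hxF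
        exact one_ne_zero (hx hxF)
      rw [MeasureTheory.ae_iff] at hmem
      simpa [Set.compl_def] using hmem
    have hadd := measure_add_measure_compl (μ := μ) hF
    rw [h0, add_zero, hμ] at hadd
    exact absurd hadd hFfin.ne
  -- the measures of the spanning sets tend to infinity
  have hμE : ∀ t : ℝ≥0∞, t < ⊤ → ∃ k, t < μ (E k) := by
    intro t ht
    have hsup : (⨆ k, μ (E k)) = ⊤ := by
      rw [← (monotone_spanningSets μ).directed_le.measure_iUnion]
      simp only [hE, iUnion_spanningSets, hμ]
    rw [← hsup] at ht
    exact lt_iSup_iff.mp ht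
  have hsupN : (⨆ k, Xbar.N (g k)) ≤ 1 := by
    refine iSup_le fun k => ?_
    have := (hrep ((E k).indicator fun _ => (1 : ℝ))).symm
    rw [hg]
    exact this.le.trans (hLk k)
  have key := hC g (rearrFun μ fun _ => (1 : ℝ)) ?_ ?_ ?_ ?_
  · rw [← hrep, hLtop] at key
    have hfin : ↑C * (⨆ k, Xbar.N (g k)) ≤ (C : ℝ≥0∞) := by
      calc ↑C * (⨆ k, Xbar.N (g k)) ≤ ↑C * 1 := mul_le_mul_right hsupN _
        _ = ↑C := mul_one _
    exact absurd (key.trans hfin) (not_le.mpr ENNReal.coe_lt_top)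
  · -- measurability
    intro k
    have : g k = fun t => if ENNReal.ofReal t < μ (E k) then (1 : ℝ) else 0 := by
      funext t; exact hgk k t
    rw [this]
    exact (Measurable.ite
      (measurableSet_lt ENNReal.measurable_ofReal measurable_const)
      measurable_const measurable_const).aemeasurable
  · -- monotonicity
    intro k
    refine Filter.Eventually.of_forall fun t => ?_
    have hmono : μ (E k) ≤ μ (E (k + 1)) :=
      measure_mono (monotone_spanningSets μ (Nat.le_succ k))
    rw [hgk k t, hgk (k + 1) t]
    constructor
    · split_ifs <;> norm_num
    · split_ifs with h1 h2 <;> try norm_num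
      exact absurd (h1.trans_le hmono) h2
  · -- convergence
    refine Filter.Eventually.of_forall fun t => ?_
    rw [hone]
    obtain ⟨k₀, hk₀⟩ := hμE (ENNReal.ofReal t) ENNReal.ofReal_lt_top
    refine tendsto_const_nhds.congr' ?_
    filter_upwards [Filter.eventually_ge_atTop k₀] with k hk
    rw [hgk k t, if_pos (hk₀.trans_le (measure_mono (monotone_spanningSets μ hk)))]
  · exact hsupN.trans_lt ENNReal.one_lt_top
end
end

section
/- Let n ∈ ℕ, and let M denote the Hardy–Littlewood maximal operator on ℝⁿ. Let X be a rearrangement-invariant quasi-Banach lattice over ℝⁿ (with Lebesgue measure) containing simple functions such that X ↪ L^1(ℝⁿ) continuously and limsup_{t→0⁺} t^{-1} φ_X(t) < ∞. Then L^{1,∞}(ℝⁿ) is the optimal target for (M, X, 𝒞), where 𝒞 is the collection of all rearrangement-invariant quasi-Banach lattices over ℝⁿ that are Fatou-representable: M : X → L^{1,∞}(ℝⁿ) is bounded, and for every Y ∈ 𝒞 such that M : X → Y is bounded, L^{1,∞}(ℝⁿ) ↪ Y. -/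
open MeasureTheory Set Filter
open scoped ENNReal NNReal Classical Topology

noncomputable section

variable {α β : Type*} [MeasurableSpace α] [MeasurableSpace β]

/-! ### Auxiliary lemmas -/

section AuxRearr
variable {μ : Measure α}

lemma aux_rearr_le {f : α → ℝ} {t l : ℝ≥0∞}
    (h : μ {x | l < (‖f x‖₊ : ℝ≥0∞)} ≤ t) : rearr μ f t ≤ l := sInf_le h

lemma aux_le_rearr {f : α → ℝ} {t L : ℝ≥0∞}
    (h : ∀ l, l < L → t < μ {x | l < (‖f x‖₊ : ℝ≥0∞)}) : L ≤ rearr μ f t :=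
  le_sInf fun l hl => by
    by_contra hc
    exact absurd hl (not_le.2 (h l (not_le.1 hc)))

lemma aux_rearr_anti (f : α → ℝ) : Antitone (rearr μ f) := fun s t h =>
  sInf_le_sInf fun l hl => le_trans hl h

lemma aux_measurable_rearrFun (f : α → ℝ) : Measurable (rearrFun μ f) := by
  have h : Antitone (fun t : ℝ => rearr μ f (ENNReal.ofReal t)) := fun s t hst =>
    aux_rearr_anti f (ENNReal.ofReal_le_ofReal hst)
  exact ENNReal.measurable_toReal.comp h.measurable

lemma aux_norm_indicator_set (E : Set α) (l : ℝ≥0∞) :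
    {x | l < (‖(E.indicator fun _ => (1:ℝ)) x‖₊ : ℝ≥0∞)} = if l < 1 then E else ∅ := by
  have hval : ∀ x, (‖(E.indicator fun _ => (1:ℝ)) x‖₊ : ℝ≥0∞) = if x ∈ E then 1 else 0 := by
    intro x
    by_cases hx : x ∈ E
    · rw [Set.indicator_of_mem hx]; simp [hx]
    · rw [Set.indicator_of_notMem hx]; simp [hx]
  ext x
  rw [Set.mem_setOf_eq, hval x]
  by_cases hx : x ∈ E <;> by_cases hl : l < 1 <;> simp [hx, hl, not_lt.1, le_of_not_gt]
  all_goals first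
    | exact le_of_not_lt hl
    | exact not_lt.2 (zero_le l)

lemma aux_rearr_indicator_congr {E F : Set α} (h : μ E = μ F) :
    rearr μ (E.indicator fun _ => (1:ℝ)) = rearr μ (F.indicator fun _ => (1:ℝ)) := by
  funext t
  unfold rearr
  congr 1
  ext l
  simp only [Set.mem_setOf_eq, aux_norm_indicator_set]
  split_ifs <;> simp [h]

end AuxRearr

section AuxMax

variable {n : ℕ}

local notation "En" => EuclideanSpace ℝ (Fin n)

lemma aux_hlMax_nonneg (f : En → ℝ) (x : En) : 0 ≤ hlMax f x := ENNReal.toReal_nonneg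

lemma aux_volume_ball (hn : 0 < n) (x : En) (r : ℝ) :
    volume (Metric.ball x r) = (ENNReal.ofReal r) ^ n *
      ENNReal.ofReal (Real.sqrt Real.pi ^ n / Real.Gamma (n / 2 + 1)) := by
  haveI : Nonempty (Fin n) := ⟨⟨0, hn⟩⟩
  simpa using EuclideanSpace.volume_ball (Fin n) x r

lemma aux_volume_closedBall (hn : 0 < n) (x : En) (r : ℝ) :
    volume (Metric.closedBall x r) = (ENNReal.ofReal r) ^ n *
      ENNReal.ofReal (Real.sqrt Real.pi ^ n / Real.Gamma (n / 2 + 1)) := by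
  haveI : Nonempty (Fin n) := ⟨⟨0, hn⟩⟩
  simpa using EuclideanSpace.volume_closedBall (Fin n) x r

lemma aux_cn_pos (hn : 0 < n) : 0 < Real.sqrt Real.pi ^ n / Real.Gamma (n / 2 + 1) :=
  div_pos (pow_pos (Real.sqrt_pos.2 Real.pi_pos) n) (Real.Gamma_pos_of_pos (by positivity))

/-- Weak-type (1,1) estimate for the Hardy–Littlewood maximal operator. -/
lemma aux_hlMax_weak (hn : 0 < n) (f : En → ℝ)
    (hf : (∫⁻ x, (‖f x‖₊ : ℝ≥0∞)) ≠ ⊤) {s : ℝ} (hs : 0 < s) :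
    ENNReal.ofReal s * volume {x : En | s < hlMax f x} ≤
      ENNReal.ofReal (4 ^ n) * ∫⁻ x, (‖f x‖₊ : ℝ≥0∞) := by
  classical
  set I := ∫⁻ x, (‖f x‖₊ : ℝ≥0∞) with hI
  set c : ℝ≥0∞ := ENNReal.ofReal (Real.sqrt Real.pi ^ n / Real.Gamma (n / 2 + 1)) with hc
  have hc0 : c ≠ 0 := by
    simp only [hc, ne_eq, ENNReal.ofReal_eq_zero, not_le]
    exact aux_cn_pos hn
  set Es : Set En := {x | s < hlMax f x} with hEs
  set R₀ : ℝ := max 1 ((I / (ENNReal.ofReal s * c)).toReal) with hR₀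
  -- for each point of Es, choose a good ball
  have key : ∀ x, x ∈ Es → ∃ z : En, ∃ r : ℝ, 0 < r ∧ x ∈ Metric.ball z r ∧
      ENNReal.ofReal s * volume (Metric.ball z r) ≤
        (∫⁻ y in Metric.ball z r, (‖f y‖₊ : ℝ≥0∞)) ∧ r ≤ R₀ := by
    intro x hx
    have hx' : s < hlMax f x := hx
    have hT : (⨆ (z : En) (r : ℝ) (_ : 0 < r) (_ : x ∈ Metric.ball z r),
        (volume (Metric.ball z r))⁻¹ * ∫⁻ y in Metric.ball z r, (‖f y‖₊ : ℝ≥0∞)) ≠ ⊤ := by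
      intro htop
      rw [hlMax, htop, ENNReal.toReal_top] at hx'
      exact absurd hx' (not_lt.2 hs.le)
    have hlt : ENNReal.ofReal s < ⨆ (z : En) (r : ℝ) (_ : 0 < r) (_ : x ∈ Metric.ball z r),
        (volume (Metric.ball z r))⁻¹ * ∫⁻ y in Metric.ball z r, (‖f y‖₊ : ℝ≥0∞) := by
      rw [ENNReal.ofReal_lt_iff_lt_toReal hs.le hT]
      exact hx'
    obtain ⟨z, hz⟩ := lt_iSup_iff.1 hlt
    obtain ⟨r, hr⟩ := lt_iSup_iff.1 hz
    obtain ⟨hrpos, hr2⟩ := lt_iSup_iff.1 hr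
    obtain ⟨hxball, hball⟩ := lt_iSup_iff.1 hr2
    set V := volume (Metric.ball z r) with hV
    set J := ∫⁻ y in Metric.ball z r, (‖f y‖₊ : ℝ≥0∞) with hJ
    have hV0 : V ≠ 0 := (Metric.measure_ball_pos volume z hrpos).ne'
    have hVtop : V ≠ ⊤ := measure_ball_lt_top.ne
    have hmain : ENNReal.ofReal s * V ≤ J := by
      have := (ENNReal.mul_lt_mul_iff_left hV0 hVtop).2 hball
      calc ENNReal.ofReal s * V ≤ V⁻¹ * J * V := this.le
        _ = J * (V⁻¹ * V) := by ring
        _ = J := by rw [ENNReal.inv_mul_cancel hV0 hVtop, mul_one]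
    have hJI : J ≤ I := by
      rw [hJ, hI]
      exact MeasureTheory.setLIntegral_le_lintegral _ _
    refine ⟨z, r, hrpos, hxball, hmain, ?_⟩
    -- radius bound
    rcases le_or_gt r 1 with h1 | h1
    · exact le_trans h1 (le_max_left _ _)
    · have hrn : r ≤ r ^ n := le_self_pow₀ h1.le hn.ne'
      have hsc0 : ENNReal.ofReal s * c ≠ 0 :=
        mul_ne_zero (by simp [ENNReal.ofReal_eq_zero, not_le, hs]) hc0
      have hsctop : ENNReal.ofReal s * c ≠ ⊤ := by
        exact ENNReal.mul_ne_top ENNReal.ofReal_ne_top ENNReal.ofReal_ne_top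
      have hVle : ENNReal.ofReal s * c * ENNReal.ofReal (r ^ n) ≤ I := by
        calc ENNReal.ofReal s * c * ENNReal.ofReal (r ^ n)
            = ENNReal.ofReal s * (ENNReal.ofReal r ^ n * c) := by
              rw [ENNReal.ofReal_pow (by positivity)]; ring
          _ = ENNReal.ofReal s * V := by rw [hV, aux_volume_ball hn, ← hc]
          _ ≤ J := hmain
          _ ≤ I := hJI
      have hdiv : ENNReal.ofReal (r ^ n) ≤ I / (ENNReal.ofReal s * c) := by
        rw [ENNReal.le_div_iff_mul_le (Or.inl hsc0) (Or.inl hsctop), mul_comm]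
        exact hVle
      have hdivtop : I / (ENNReal.ofReal s * c) ≠ ⊤ :=
        (ENNReal.div_lt_top hf hsc0).ne
      have : r ^ n ≤ (I / (ENNReal.ofReal s * c)).toReal := by
        rw [← ENNReal.ofReal_le_iff_le_toReal hdivtop]
        exact hdiv
      calc r ≤ r ^ n := hrn
        _ ≤ _ := this
        _ ≤ R₀ := le_max_right _ _
  choose! z r hrpos hxball hsV hrR using key
  -- Vitali covering
  obtain ⟨u, huEs, hdisj, hcover⟩ :=
    Vitali.exists_disjoint_subfamily_covering_enlargement_closedBall Es z r R₀
      (fun a ha => hrR a ha) 4 (by norm_num)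
  -- u is countable
  have hucount : u.Countable := by
    have hpos : ∀ b : u, 0 < volume (Metric.closedBall (z b) (r b)) := fun b =>
      lt_of_lt_of_le (Metric.measure_ball_pos volume _ (hrpos b (huEs b.2)))
        (measure_mono Metric.ball_subset_closedBall)
    have hdisj' : Pairwise (Function.onFun Disjoint fun b : u => Metric.closedBall (z b) (r b)) := by
      intro b₁ b₂ hne
      exact hdisj b₁.2 b₂.2 (fun h => hne (Subtype.ext h))
    have := MeasureTheory.Measure.countable_meas_pos_of_disjoint_iUnion
      (μ := (volume : Measure En))
      (fun b : u => measurableSet_closedBall) hdisj'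
    have huniv : {i : u | 0 < volume (Metric.closedBall (z i) (r i))} = Set.univ := by
      ext b; simp [hpos b]
    rw [huniv, Set.countable_univ_iff] at this
    exact Set.countable_coe_iff.1 this
  haveI : Countable u := Set.countable_coe_iff.2 hucount
  -- measure bound
  have hEsub : Es ⊆ ⋃ b : u, Metric.closedBall (z b) (4 * r b) := by
    intro x hx
    obtain ⟨b, hbu, hb⟩ := hcover x hx
    refine Set.mem_iUnion.2 ⟨⟨b, hbu⟩, hb ?_⟩
    exact Metric.ball_subset_closedBall (hxball x hx)
  have hvol : volume Es ≤ ENNReal.ofReal (4 ^ n) * ∑' b : u, volume (Metric.ball (z b) (r b)) := by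
    calc volume Es ≤ volume (⋃ b : u, Metric.closedBall (z b) (4 * r b)) := measure_mono hEsub
      _ ≤ ∑' b : u, volume (Metric.closedBall (z b) (4 * r b)) := measure_iUnion_le _
      _ = ∑' b : u, ENNReal.ofReal (4 ^ n) * volume (Metric.ball (z b) (r b)) := by
          congr 1; funext b
          rw [aux_volume_closedBall hn, aux_volume_ball hn,
            ENNReal.ofReal_mul (by norm_num : (0:ℝ) ≤ 4), mul_pow,
            ← ENNReal.ofReal_pow (by norm_num : (0:ℝ) ≤ 4), mul_assoc]
      _ = ENNReal.ofReal (4 ^ n) * ∑' b : u, volume (Metric.ball (z b) (r b)) :=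
          ENNReal.tsum_mul_left
  have hdisj2 : Pairwise (Function.onFun Disjoint fun b : u => Metric.ball (z b) (r b)) := by
    intro b₁ b₂ hne
    exact Disjoint.mono Metric.ball_subset_closedBall Metric.ball_subset_closedBall
      (hdisj b₁.2 b₂.2 (fun h => hne (Subtype.ext h)))
  have hsum : ∑' b : u, (ENNReal.ofReal s * volume (Metric.ball (z b) (r b))) ≤ I := by
    calc ∑' b : u, (ENNReal.ofReal s * volume (Metric.ball (z b) (r b)))
        ≤ ∑' b : u, ∫⁻ y in Metric.ball (z b) (r b), (‖f y‖₊ : ℝ≥0∞) :=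
          ENNReal.tsum_le_tsum fun b => hsV b (huEs b.2)
      _ = ∫⁻ y in ⋃ b : u, Metric.ball (z b) (r b), (‖f y‖₊ : ℝ≥0∞) :=
          (lintegral_iUnion (fun b => measurableSet_ball) hdisj2 _).symm
      _ ≤ I := MeasureTheory.setLIntegral_le_lintegral _ _
  calc ENNReal.ofReal s * volume Es
      ≤ ENNReal.ofReal s * (ENNReal.ofReal (4 ^ n) * ∑' b : u, volume (Metric.ball (z b) (r b))) :=
        mul_le_mul_right hvol _
    _ = ENNReal.ofReal (4 ^ n) * ∑' b : u, (ENNReal.ofReal s * volume (Metric.ball (z b) (r b))) := by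
        rw [ENNReal.tsum_mul_left]; ring
    _ ≤ ENNReal.ofReal (4 ^ n) * I := mul_le_mul_right hsum _

end AuxMax

section AuxPart1

variable {n : ℕ}

local notation "En" => EuclideanSpace ℝ (Fin n)

lemma aux_weakNorm_one (μ : Measure α) (g : α → ℝ) :
    weakNorm μ 1 g = ⨆ (s : ℝ) (_ : 0 < s), ENNReal.ofReal s * μ {x | s < |g x|} := by
  rw [weakNorm, if_neg ENNReal.one_ne_top]
  congr 1; funext s; congr 1; funext hs
  norm_num

lemma aux_part1 (hn : 0 < n) (X : QBLattice (volume : Measure En))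
    (hXL1 : ∃ C : ℝ≥0, ∀ f : En → ℝ, (∫⁻ x, (‖f x‖₊ : ℝ≥0∞)) ≤ C * X.N f) :
    ∃ C : ℝ≥0, ∀ f : En → ℝ,
      weakNorm (volume : Measure En) 1 (hlMax f) ≤ C * X.N f := by
  obtain ⟨C₀, hC₀⟩ := hXL1
  refine ⟨4 ^ n * C₀ + 1, fun f => ?_⟩
  by_cases hI : (∫⁻ x, (‖f x‖₊ : ℝ≥0∞)) = ⊤
  · have hXf : X.N f = ⊤ := by
      by_contra h
      have : (C₀ : ℝ≥0∞) * X.N f < ⊤ :=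
        ENNReal.mul_lt_top ENNReal.coe_lt_top (lt_top_iff_ne_top.2 h)
      exact absurd (hI ▸ hC₀ f) (not_le.2 this)
    rw [hXf, ENNReal.mul_top (by positivity)]
    exact le_top
  · rw [aux_weakNorm_one]
    refine iSup_le fun s => iSup_le fun hs => ?_
    have habs : {x : En | s < |hlMax f x|} = {x : En | s < hlMax f x} := by
      ext x; simp [abs_of_nonneg (aux_hlMax_nonneg f x)]
    rw [habs]
    calc ENNReal.ofReal s * volume {x : En | s < hlMax f x}
        ≤ ENNReal.ofReal (4 ^ n) * ∫⁻ x, (‖f x‖₊ : ℝ≥0∞) := aux_hlMax_weak hn f hI hs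
      _ ≤ ENNReal.ofReal (4 ^ n) * ((C₀ : ℝ≥0∞) * X.N f) :=
          mul_le_mul_right (hC₀ f) _
      _ ≤ ((4 ^ n * C₀ + 1 : ℝ≥0) : ℝ≥0∞) * X.N f := by
          rw [← mul_assoc]
          apply mul_le_mul_left
          have : ENNReal.ofReal ((4:ℝ) ^ n) = ((4 ^ n : ℝ≥0) : ℝ≥0∞) := by
            rw [ENNReal.ofReal_pow (by norm_num : (0:ℝ) ≤ 4)]
            norm_num
          rw [this, ← ENNReal.coe_mul]
          exact ENNReal.coe_le_coe.2 le_self_add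

end AuxPart1

section AuxZero

lemma aux_nzero (X : QBLattice (volume : Measure (EuclideanSpace ℝ (Fin 0))))
    (hfund : Filter.limsup (fun t : ℝ≥0∞ => t ^ (-(1 : ℝ)) * X.fund t)
      (nhdsWithin 0 (Set.Ioi 0)) < ⊤) : False := by
  haveI hsub : Subsingleton (EuclideanSpace ℝ (Fin 0)) :=
    ⟨fun a b => Subsingleton.elim a b⟩
  set c := volume (Set.univ : Set (EuclideanSpace ℝ (Fin 0))) with hc
  set ε : ℝ≥0∞ := if c = 0 then 1 else min c 1 with hε
  have hε0 : 0 < ε := by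
    rw [hε]; split_ifs with h
    · norm_num
    · exact lt_min (pos_iff_ne_zero.2 h) zero_lt_one
  have hε1 : ε ≤ 1 := by
    rw [hε]; split_ifs
    · exact le_rfl
    · exact min_le_right _ _
  have hkey : ∀ t : ℝ≥0∞, 0 < t → t < ε → (fun t => t ^ (-(1:ℝ)) * X.fund t) t = ⊤ := by
    intro t ht0 htε
    have hne : ∀ E : Set (EuclideanSpace ℝ (Fin 0)), MeasurableSet E → volume E ≠ t := by
      intro E _
      rcases Set.eq_empty_or_nonempty E with rfl | hE
      · simpa using ht0.ne
      · have hEuniv : E = Set.univ := by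
          obtain ⟨x, hx⟩ := hE
          ext y
          simp only [Set.mem_univ, iff_true]
          rwa [Subsingleton.elim y x]
        rw [hEuniv, ← hc]
        intro hct
        rw [hε] at htε
        rcases eq_or_ne c 0 with h0 | h0
        · exact ht0.ne' (hct ▸ h0)
        · rw [if_neg h0] at htε
          exact absurd (hct ▸ lt_min_iff.1 htε |>.1) (lt_irrefl _)
    have hfundtop : X.fund t = ⊤ := by
      refine eq_top_iff.2 (le_iInf fun E => le_iInf fun hE => le_iInf fun ht => ?_)
      exact absurd ht (hne E hE)
    have httop : t ≠ ⊤ := (lt_of_lt_of_le htε hε1).trans_le le_top |>.ne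
    show t ^ (-(1:ℝ)) * X.fund t = ⊤
    rw [hfundtop, ENNReal.rpow_neg_one, ENNReal.mul_top (ENNReal.inv_ne_zero.2 httop)]
  have hev : ∀ᶠ t in nhdsWithin (0:ℝ≥0∞) (Set.Ioi 0),
      (fun t => t ^ (-(1:ℝ)) * X.fund t) t = ⊤ := by
    filter_upwards [eventually_nhdsWithin_of_eventually_nhds
      (ENNReal.nhds_zero_basis.eventually_iff.2 ⟨ε, hε0, fun t ht => ht⟩),
      self_mem_nhdsWithin] with t htε ht0
    exact hkey t ht0 htε
  rw [Filter.limsup_congr hev, Filter.limsup_const] at hfund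
  exact absurd hfund (lt_irrefl _)

end AuxZero

section AuxLower

variable {n : ℕ}

local notation "En" => EuclideanSpace ℝ (Fin n)

lemma aux_inv_mul_le_one (a : ℝ≥0∞) : a⁻¹ * a ≤ 1 := by
  rcases eq_or_ne a 0 with rfl | h0; · simp
  rcases eq_or_ne a ⊤ with rfl | ht; · simp
  rw [ENNReal.inv_mul_cancel h0 ht]

lemma aux_sup_le (f : En → ℝ) {c : ℝ} (h : ∀ y, |f y| ≤ c) (x : En) :
    (⨆ (z : En) (r : ℝ) (_ : 0 < r) (_ : x ∈ Metric.ball z r),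
      (volume (Metric.ball z r))⁻¹ * ∫⁻ y in Metric.ball z r, (‖f y‖₊ : ℝ≥0∞))
      ≤ ENNReal.ofReal c := by
  refine iSup_le fun z => iSup_le fun r => iSup_le fun hr => iSup_le fun hx => ?_
  have hint : (∫⁻ y in Metric.ball z r, (‖f y‖₊ : ℝ≥0∞)) ≤
      ENNReal.ofReal c * volume (Metric.ball z r) := by
    calc ∫⁻ y in Metric.ball z r, (‖f y‖₊ : ℝ≥0∞)
        ≤ ∫⁻ _ in Metric.ball z r, ENNReal.ofReal c := lintegral_mono fun y => by
          rw [← enorm_eq_nnnorm, Real.enorm_eq_ofReal_abs]; exact ENNReal.ofReal_le_ofReal (h y)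
      _ = ENNReal.ofReal c * volume (Metric.ball z r) := setLIntegral_const _ _
  calc (volume (Metric.ball z r))⁻¹ * ∫⁻ y in Metric.ball z r, (‖f y‖₊ : ℝ≥0∞)
      ≤ (volume (Metric.ball z r))⁻¹ * (ENNReal.ofReal c * volume (Metric.ball z r)) :=
        mul_le_mul_right hint _
    _ = ENNReal.ofReal c * ((volume (Metric.ball z r))⁻¹ * volume (Metric.ball z r)) := by ring
    _ ≤ ENNReal.ofReal c * 1 := mul_le_mul_right (aux_inv_mul_le_one _) _
    _ = ENNReal.ofReal c := mul_one _

lemma aux_hlMax_le (f : En → ℝ) {c : ℝ} (hc : 0 ≤ c) (h : ∀ y, |f y| ≤ c) (x : En) :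
    hlMax f x ≤ c :=
  ENNReal.toReal_le_of_le_ofReal hc (aux_sup_le f h x)

lemma aux_hlMax_indicator_lower (hn : 0 < n) {rk v : ℝ} (hrk : 0 < rk)
    (hvdef : v = rk ^ n * (Real.sqrt Real.pi ^ n / Real.Gamma (n / 2 + 1))) (x : En) :
    ((‖x‖ + rk) ^ n * (Real.sqrt Real.pi ^ n / Real.Gamma (n / 2 + 1)))⁻¹ ≤
      hlMax (fun y => v⁻¹ *
        (Metric.ball (0:En) rk).indicator (fun _ => (1:ℝ)) y) x := by
  set cn : ℝ := Real.sqrt Real.pi ^ n / Real.Gamma (n / 2 + 1) with hcn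
  have hcn0 : 0 < cn := aux_cn_pos hn
  have hv : v = rk ^ n * cn := hvdef
  have hv0 : 0 < v := by rw [hv]; positivity
  set g : En → ℝ := fun y => v⁻¹ * (Metric.ball (0:En) rk).indicator (fun _ => (1:ℝ)) y with hg
  have habs : ∀ y, |g y| ≤ v⁻¹ := by
    intro y
    rw [hg]
    by_cases hy : y ∈ Metric.ball (0:En) rk
    · simp [Set.indicator_of_mem hy, abs_of_nonneg (inv_nonneg.2 hv0.le)]
    · simp [Set.indicator_of_notMem hy, inv_nonneg.2 hv0.le]
  have hS := aux_sup_le g habs x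
  have hStop : (⨆ (z : En) (r : ℝ) (_ : 0 < r) (_ : x ∈ Metric.ball z r),
      (volume (Metric.ball z r))⁻¹ * ∫⁻ y in Metric.ball z r, (‖g y‖₊ : ℝ≥0∞)) ≠ ⊤ :=
    (lt_of_le_of_lt hS ENNReal.ofReal_lt_top).ne
  set R : ℝ := ‖x‖ + rk with hR
  have hR0 : 0 < R := by positivity
  have hxR : x ∈ Metric.ball (0:En) R := by
    rw [mem_ball_zero_iff]
    have := norm_nonneg x
    rw [hR]; linarith
  have hvol : ∀ ρ : ℝ, 0 < ρ → volume (Metric.ball (0:En) ρ) = ENNReal.ofReal (ρ ^ n * cn) := by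
    intro ρ hρ
    rw [aux_volume_ball hn, ← ENNReal.ofReal_pow hρ.le, ← ENNReal.ofReal_mul (by positivity)]
  have hsmall : (∫⁻ y in Metric.ball (0:En) rk, (‖g y‖₊ : ℝ≥0∞)) = 1 := by
    have hcong : (∫⁻ y in Metric.ball (0:En) rk, (‖g y‖₊ : ℝ≥0∞)) =
        ∫⁻ _ in Metric.ball (0:En) rk, ENNReal.ofReal v⁻¹ := by
      refine setLIntegral_congr_fun measurableSet_ball (fun y hy => ?_)
      rw [hg]
      simp only [Set.indicator_of_mem hy, mul_one]
      rw [← enorm_eq_nnnorm, Real.enorm_eq_ofReal_abs, abs_of_nonneg (inv_nonneg.2 hv0.le)]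
    rw [hcong, setLIntegral_const, hvol rk hrk, ← hv, ← ENNReal.ofReal_mul (inv_nonneg.2 hv0.le),
      inv_mul_cancel₀ hv0.ne', ENNReal.ofReal_one]
  have hbig : (1:ℝ≥0∞) ≤ ∫⁻ y in Metric.ball (0:En) R, (‖g y‖₊ : ℝ≥0∞) := by
    rw [← hsmall]
    exact lintegral_mono_set (Metric.ball_subset_ball (by rw [hR]; linarith [norm_nonneg x]))
  have hterm : ENNReal.ofReal ((R ^ n * cn)⁻¹) ≤
      (⨆ (z : En) (r : ℝ) (_ : 0 < r) (_ : x ∈ Metric.ball z r),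
        (volume (Metric.ball z r))⁻¹ * ∫⁻ y in Metric.ball z r, (‖g y‖₊ : ℝ≥0∞)) := by
    have h1 : ENNReal.ofReal ((R ^ n * cn)⁻¹) ≤
        (volume (Metric.ball (0:En) R))⁻¹ * ∫⁻ y in Metric.ball (0:En) R, (‖g y‖₊ : ℝ≥0∞) := by
      rw [hvol R hR0, ← ENNReal.ofReal_inv_of_pos (by positivity)]
      calc ENNReal.ofReal ((R ^ n * cn)⁻¹)
          = ENNReal.ofReal ((R ^ n * cn)⁻¹) * 1 := (mul_one _).symm
        _ ≤ _ := mul_le_mul_right hbig _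
    refine le_trans h1 ?_
    exact le_iSup_of_le (0:En) (le_iSup_of_le R (le_iSup_of_le hR0 (le_iSup_of_le hxR le_rfl)))
  have := ENNReal.toReal_mono hStop hterm
  rw [ENNReal.toReal_ofReal (by positivity)] at this
  exact this

end AuxLower

section AuxWeak
variable {μ : Measure α}

lemma aux_meas_abs_le_weak (f : α → ℝ) {s : ℝ} (hs : 0 < s) :
    ENNReal.ofReal s * μ {x | ENNReal.ofReal s < (‖f x‖₊ : ℝ≥0∞)} ≤ weakNorm μ 1 f := by
  have hset : {x | ENNReal.ofReal s < (‖f x‖₊ : ℝ≥0∞)} = {x | s < |f x|} := by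
    ext x
    rw [Set.mem_setOf_eq, Set.mem_setOf_eq, ← enorm_eq_nnnorm, Real.enorm_eq_ofReal_abs,
      ENNReal.ofReal_lt_ofReal_iff_of_nonneg hs.le]
  rw [hset, aux_weakNorm_one]
  exact le_iSup_of_le s (le_iSup_of_le hs le_rfl)

lemma aux_rearr_le_weak (f : α → ℝ) (hWtop : weakNorm μ 1 f ≠ ⊤)
    {t : ℝ} (ht : 0 < t) :
    rearr μ f (ENNReal.ofReal t) ≤ ENNReal.ofReal ((weakNorm μ 1 f).toReal / t) := by
  set W := weakNorm μ 1 f with hW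
  by_cases hW0 : W = 0
  · refine le_trans (aux_rearr_le (t := ENNReal.ofReal t) (l := 0) ?_) zero_le
    have hnull : ∀ m : ℕ, μ {x | ENNReal.ofReal (1/(m+1)) < (‖f x‖₊ : ℝ≥0∞)} = 0 := by
      intro m
      have h := aux_meas_abs_le_weak (μ := μ) f (s := 1/(m+1)) (by positivity)
      rw [← hW, hW0, le_zero_iff, mul_eq_zero] at h
      rcases h with h | h
      · rw [ENNReal.ofReal_eq_zero] at h
        exfalso
        have : (0:ℝ) < 1/(m+1) := by positivity
        linarith
      · exact h
    have hsub : {x | (0:ℝ≥0∞) < (‖f x‖₊ : ℝ≥0∞)} ⊆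
        ⋃ m : ℕ, {x | ENNReal.ofReal (1/(m+1)) < (‖f x‖₊ : ℝ≥0∞)} := by
      intro x hx
      have hfx : 0 < |f x| := by
        by_contra h
        push_neg at h
        have h0 : |f x| = 0 := le_antisymm h (abs_nonneg _)
        rw [Set.mem_setOf_eq, ← enorm_eq_nnnorm, Real.enorm_eq_ofReal_abs, h0] at hx
        simp at hx
      obtain ⟨m, hm⟩ := exists_nat_one_div_lt hfx
      refine Set.mem_iUnion.2 ⟨m, ?_⟩
      rw [Set.mem_setOf_eq, ← enorm_eq_nnnorm, Real.enorm_eq_ofReal_abs]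
      exact (ENNReal.ofReal_lt_ofReal_iff hfx).2 hm
    refine le_trans (measure_mono hsub) ?_
    rw [measure_iUnion_null hnull]
    exact zero_le
  · have hWt : 0 < W.toReal := ENNReal.toReal_pos hW0 hWtop
    set s := W.toReal / t with hs
    have hs0 : 0 < s := by positivity
    apply aux_rearr_le
    set S : ℕ → Set α := fun m => {x | ENNReal.ofReal (s + 1/(m+1)) < (‖f x‖₊ : ℝ≥0∞)} with hSdef
    have hmono : Monotone S := by
      intro m m' hmm' x hx
      refine lt_of_le_of_lt (ENNReal.ofReal_le_ofReal ?_) hx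
      have hcast : ((m:ℝ)+1) ≤ (m':ℝ)+1 := by
        have := (Nat.cast_le (α := ℝ)).2 hmm'
        linarith
      have : (1:ℝ)/(m'+1) ≤ 1/(m+1) := one_div_le_one_div_of_le (by positivity) hcast
      linarith
    have hsub : {x | ENNReal.ofReal s < (‖f x‖₊:ℝ≥0∞)} ⊆ ⋃ m, S m := by
      intro x hx
      have hfx : s < |f x| := by
        rw [Set.mem_setOf_eq, ← enorm_eq_nnnorm, Real.enorm_eq_ofReal_abs,
          ENNReal.ofReal_lt_ofReal_iff_of_nonneg hs0.le] at hx
        exact hx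
      obtain ⟨m, hm⟩ := exists_nat_one_div_lt (sub_pos.2 hfx)
      refine Set.mem_iUnion.2 ⟨m, ?_⟩
      show ENNReal.ofReal (s + 1/(m+1)) < (‖f x‖₊ : ℝ≥0∞)
      rw [← enorm_eq_nnnorm, Real.enorm_eq_ofReal_abs]
      rw [ENNReal.ofReal_lt_ofReal_iff_of_nonneg (by positivity)]
      linarith
    have hSm : ∀ m, μ (S m) ≤ ENNReal.ofReal t := by
      intro m
      have h := aux_meas_abs_le_weak (μ := μ) f (s := s + 1/(m+1)) (by positivity)
      rw [← hW] at h
      have h2 : μ (S m) ≤ W / ENNReal.ofReal (s + 1/(m+1)) := by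
        rw [ENNReal.le_div_iff_mul_le
          (Or.inl (ENNReal.ofReal_pos.2 (by positivity)).ne')
          (Or.inl ENNReal.ofReal_ne_top), mul_comm]
        exact h
      refine le_trans h2 ?_
      conv_lhs => rw [← ENNReal.ofReal_toReal hWtop]
      rw [← ENNReal.ofReal_div_of_pos (by positivity)]
      apply ENNReal.ofReal_le_ofReal
      have h3 : W.toReal / (s + 1/(m+1)) ≤ W.toReal / s :=
        div_le_div_of_nonneg_left hWt.le hs0 (le_add_of_nonneg_right (by positivity))
      refine le_trans h3 (le_of_eq ?_)
      rw [hs]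
      field_simp
    calc μ _ ≤ μ (⋃ m, S m) := measure_mono hsub
      _ = ⨆ m, μ (S m) := hmono.directed_le.measure_iUnion
      _ ≤ ENNReal.ofReal t := iSup_le hSm

end AuxWeak

section AuxPart2

variable {n : ℕ}

local notation "En" => EuclideanSpace ℝ (Fin n)

set_option maxHeartbeats 1000000 in
lemma aux_part2 (hn : 0 < n) (X : QBLattice (volume : Measure En)) (hXri : X.RearrInv)
    (hfund : Filter.limsup (fun t : ℝ≥0∞ => t ^ (-(1 : ℝ)) * X.fund t)
      (nhdsWithin 0 (Set.Ioi 0)) < ⊤)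
    (Y : QBLattice (volume : Measure En)) (hYrep : FatouRepresentable Y)
    (hbound : ∃ C : ℝ≥0, ∀ f : En → ℝ, Y.N (hlMax f) ≤ C * X.N f) :
    ∃ C : ℝ≥0, ∀ f : En → ℝ, Y.N f ≤ C * weakNorm volume 1 f := by
  classical
  obtain ⟨Ybar, hYbarRI, ⟨CF, hCF0, hFatou⟩, hrep⟩ := hYrep
  obtain ⟨C0, hC0⟩ := hbound
  -- fundamental function bound near zero
  set B : ℝ≥0∞ := Filter.limsup (fun t : ℝ≥0∞ => t ^ (-(1 : ℝ)) * X.fund t)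
    (nhdsWithin 0 (Set.Ioi 0)) + 1 with hB
  have hBtop : B ≠ ⊤ := ENNReal.add_ne_top.2 ⟨hfund.ne, ENNReal.one_ne_top⟩
  have hev : ∀ᶠ t in nhdsWithin (0:ℝ≥0∞) (Set.Ioi 0),
      t ^ (-(1:ℝ)) * X.fund t < B :=
    Filter.eventually_lt_of_limsup_lt (ENNReal.lt_add_right hfund.ne one_ne_zero)
  rw [eventually_nhdsWithin_iff] at hev
  obtain ⟨ε, hε0, hεP⟩ := ENNReal.nhds_zero_basis.eventually_iff.1 hev
  have hfb : ∀ t : ℝ≥0∞, 0 < t → t < min ε 1 → X.fund t ≤ B * t := by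
    intro t ht0 htε
    have ht1 : t < 1 := lt_of_lt_of_le htε (min_le_right _ _)
    have httop : t ≠ ⊤ := (ht1.trans ENNReal.one_lt_top).ne
    have h := hεP (lt_of_lt_of_le htε (min_le_left _ _)) ht0
    rw [ENNReal.rpow_neg_one] at h
    calc X.fund t = t * (t⁻¹ * X.fund t) := by
          rw [← mul_assoc, ENNReal.mul_inv_cancel ht0.ne' httop, one_mul]
      _ ≤ t * B := mul_le_mul_right h.le _
      _ = B * t := mul_comm _ _
  -- geometric constants
  set cn : ℝ := Real.sqrt Real.pi ^ n / Real.Gamma (n / 2 + 1) with hcn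
  have hcn0 : 0 < cn := aux_cn_pos hn
  obtain ⟨δ, hδ0, hδ⟩ : ∃ δ : ℝ, 0 < δ ∧ ENNReal.ofReal δ < min ε 1 := by
    have he0 : 0 < min ε 1 := lt_min hε0 zero_lt_one
    have hetop : min ε 1 ≠ ⊤ := ((min_le_right ε 1).trans_lt ENNReal.one_lt_top).ne
    have htR : 0 < (min ε 1).toReal := ENNReal.toReal_pos he0.ne' hetop
    refine ⟨(min ε 1).toReal / 2, by positivity, ?_⟩
    have h2 : ENNReal.ofReal ((min ε 1).toReal / 2) < ENNReal.ofReal ((min ε 1).toReal) := by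
      rw [ENNReal.ofReal_lt_ofReal_iff htR]
      linarith
    rwa [ENNReal.ofReal_toReal hetop] at h2
  set ρ : ℝ := min 1 (δ / (cn + 1)) with hρ
  have hρ0 : 0 < ρ := lt_min zero_lt_one (by positivity)
  have hρ1 : ρ ≤ 1 := min_le_left _ _
  set r : ℕ → ℝ := fun k => ρ * (1/2) ^ k with hr
  have hr0 : ∀ k, 0 < r k := fun k => by rw [hr]; positivity
  set v : ℕ → ℝ := fun k => r k ^ n * cn with hv
  have hv0 : ∀ k, 0 < v k := fun k => mul_pos (pow_pos (hr0 k) n) hcn0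
  have hranti : ∀ k l, k ≤ l → r l ≤ r k := by
    intro k l hkl
    rw [hr]
    exact mul_le_mul_of_nonneg_left
      (pow_le_pow_of_le_one (by norm_num) (by norm_num) hkl) hρ0.le
  have hvanti : ∀ k l, k ≤ l → v l ≤ v k := fun k l hkl =>
    mul_le_mul_of_nonneg_right (pow_le_pow_left₀ (hr0 l).le (hranti k l hkl) n) hcn0.le
  have hvδ : ∀ k, v k < δ := by
    intro k
    have h1 : v k ≤ v 0 := hvanti 0 k (Nat.zero_le k)
    have h2 : v 0 = ρ ^ n * cn := by rw [hv, hr]; norm_num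
    have h3 : ρ ^ n ≤ ρ := pow_le_of_le_one hρ0.le hρ1 hn.ne'
    have h4 : ρ * cn ≤ (δ / (cn + 1)) * cn :=
      mul_le_mul_of_nonneg_right (min_le_right _ _) hcn0.le
    have h5 : (δ / (cn + 1)) * cn < δ := by
      rw [div_mul_eq_mul_div, div_lt_iff₀ (by positivity)]
      nlinarith
    calc v k ≤ v 0 := h1
      _ = ρ ^ n * cn := h2
      _ ≤ ρ * cn := mul_le_mul_of_nonneg_right h3 hcn0.le
      _ < δ := lt_of_le_of_lt h4 h5
  have hvtend : Filter.Tendsto v Filter.atTop (nhds 0) := by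
    have h1 : Filter.Tendsto r Filter.atTop (nhds 0) := by
      have h0 := tendsto_pow_atTop_nhds_zero_of_lt_one
        (by norm_num : (0:ℝ) ≤ 1/2) (by norm_num : (1:ℝ)/2 < 1)
      have := h0.const_mul ρ
      rw [mul_zero] at this
      exact this
    have h2 := (h1.pow n).mul_const cn
    rw [zero_pow hn.ne', zero_mul] at h2
    exact h2
  -- normalized indicators
  set g : ℕ → En → ℝ := fun k y =>
    (v k)⁻¹ * (Metric.ball (0:En) (r k)).indicator (fun _ => (1:ℝ)) y with hg
  have hball : ∀ k, volume (Metric.ball (0:En) (r k)) = ENNReal.ofReal (v k) := by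
    intro k
    rw [aux_volume_ball hn, ← hcn, ← ENNReal.ofReal_pow (hr0 k).le,
      ← ENNReal.ofReal_mul (by positivity)]
  have hNind : ∀ k, X.N ((Metric.ball (0:En) (r k)).indicator fun _ => (1:ℝ)) ≤
      B * ENNReal.ofReal (v k) := by
    intro k
    have h1 : X.N ((Metric.ball (0:En) (r k)).indicator fun _ => (1:ℝ)) ≤
        X.fund (ENNReal.ofReal (v k)) := by
      refine le_iInf fun E => le_iInf fun hE => le_iInf fun hvolE => ?_
      exact le_of_eq (hXri _ _ (aux_rearr_indicator_congr (by rw [hball k, hvolE])))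
    refine le_trans h1 (hfb _ (ENNReal.ofReal_pos.2 (hv0 k)) ?_)
    exact lt_trans ((ENNReal.ofReal_lt_ofReal_iff hδ0).2 (hvδ k)) hδ
  have hNg : ∀ k, X.N (g k) ≤ B := by
    intro k
    have hfin : X.N ((Metric.ball (0:En) (r k)).indicator fun _ => (1:ℝ)) < ⊤ :=
      lt_of_le_of_lt (hNind k)
        (ENNReal.mul_lt_top (lt_top_iff_ne_top.2 hBtop) ENNReal.ofReal_lt_top)
    have hsm := X.smul ((v k)⁻¹) _ hfin
    calc X.N (g k)
        = ENNReal.ofReal |(v k)⁻¹| *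
          X.N ((Metric.ball (0:En) (r k)).indicator fun _ => (1:ℝ)) := hsm
      _ ≤ ENNReal.ofReal ((v k)⁻¹) * (B * ENNReal.ofReal (v k)) := by
          rw [abs_of_nonneg (inv_nonneg.2 (hv0 k).le)]
          exact mul_le_mul_right (hNind k) _
      _ = B * (ENNReal.ofReal ((v k)⁻¹) * ENNReal.ofReal (v k)) := by ring
      _ = B := by
          rw [← ENNReal.ofReal_mul (inv_nonneg.2 (hv0 k).le), inv_mul_cancel₀ (hv0 k).ne',
            ENNReal.ofReal_one, mul_one]
  -- pointwise bounds for the maximal functions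
  set κ : ℝ := ((2:ℝ) ^ n)⁻¹ with hκ
  have hκ0 : 0 < κ := by rw [hκ]; positivity
  set w : En → ℝ := fun x => ‖x‖ ^ n * cn with hw
  have hw0 : ∀ x, 0 ≤ w x := fun x => mul_nonneg (pow_nonneg (norm_nonneg x) n) hcn0.le
  have hup : ∀ k x, hlMax (g k) x ≤ (v k)⁻¹ := by
    intro k x
    refine aux_hlMax_le _ (inv_nonneg.2 (hv0 k).le) (fun y => ?_) x
    by_cases hy : y ∈ Metric.ball (0:En) (r k)
    · show |(v k)⁻¹ * _| ≤ _
      simp [Set.indicator_of_mem hy, abs_of_nonneg (inv_nonneg.2 (hv0 k).le)]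
    · show |(v k)⁻¹ * _| ≤ _
      simp [Set.indicator_of_notMem hy, inv_nonneg.2 (hv0 k).le]
  have hlow : ∀ k x, κ / (w x + v k) ≤ hlMax (g k) x := by
    intro k x
    have h1 := aux_hlMax_indicator_lower hn (hr0 k) (v := v k) (by rw [hv, ← hcn]) x
    rw [← hcn] at h1
    have h2 : κ / (w x + v k) ≤ ((‖x‖ + r k) ^ n * cn)⁻¹ := by
      rw [hκ, hw, div_eq_mul_inv, ← mul_inv]
      apply inv_anti₀ (by positivity)
      have h3 : (‖x‖ + r k) ^ n ≤ 2 ^ n * (‖x‖ ^ n + r k ^ n) := by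
        have hmax : ‖x‖ + r k ≤ 2 * max ‖x‖ (r k) := by
          rcases le_total ‖x‖ (r k) with h | h
          · rw [max_eq_right h]; linarith
          · rw [max_eq_left h]; linarith [hr0 k]
        calc (‖x‖ + r k) ^ n ≤ (2 * max ‖x‖ (r k)) ^ n :=
            pow_le_pow_left₀ (by positivity) hmax n
          _ = 2 ^ n * max ‖x‖ (r k) ^ n := mul_pow 2 _ n
          _ ≤ 2 ^ n * (‖x‖ ^ n + r k ^ n) := by
              apply mul_le_mul_of_nonneg_left _ (by positivity)
              rcases le_total ‖x‖ (r k) with h | h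
              · rw [max_eq_right h]
                nlinarith [pow_nonneg (norm_nonneg x) n]
              · rw [max_eq_left h]
                nlinarith [pow_nonneg (hr0 k).le n]
      calc (‖x‖ + r k) ^ n * cn ≤ (2 ^ n * (‖x‖ ^ n + r k ^ n)) * cn :=
          mul_le_mul_of_nonneg_right h3 hcn0.le
        _ = 2 ^ n * (‖x‖ ^ n * cn + r k ^ n * cn) := by ring
    exact le_trans h2 h1
  -- rearrangement bounds
  have hrup : ∀ k (t : ℝ), rearr volume (hlMax (g k)) (ENNReal.ofReal t) ≤
      ENNReal.ofReal ((v k)⁻¹) := by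
    intro k t
    apply aux_rearr_le
    have hempty : {x : En | ENNReal.ofReal ((v k)⁻¹) < (‖hlMax (g k) x‖₊ : ℝ≥0∞)} = ∅ := by
      ext x
      simp only [Set.mem_setOf_eq, Set.mem_empty_iff_false, iff_false, not_lt]
      rw [← enorm_eq_nnnorm, Real.enorm_eq_ofReal_abs, abs_of_nonneg (aux_hlMax_nonneg _ x)]
      exact ENNReal.ofReal_le_ofReal (hup k x)
    rw [hempty, measure_empty]
    exact zero_le
  have hrlow : ∀ k (t : ℝ), 0 ≤ t →
      ENNReal.ofReal (κ / (t + v k)) ≤ rearr volume (hlMax (g k)) (ENNReal.ofReal t) := by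
    intro k t ht
    apply aux_le_rearr
    intro l hl
    have hltop : l ≠ ⊤ := (hl.trans ENNReal.ofReal_lt_top).ne
    set lam : ℝ := l.toReal with hlam
    have hlam0 : 0 ≤ lam := ENNReal.toReal_nonneg
    have hlamlt : lam < κ / (t + v k) := (ENNReal.lt_ofReal_iff_toReal_lt hltop).1 hl
    have hden0 : 0 < t + v k := add_pos_of_nonneg_of_pos ht (hv0 k)
    set s' : ℝ := (lam + κ / (t + v k)) / 2 with hs'
    have hkd0 : 0 < κ / (t + v k) := div_pos hκ0 hden0
    have hs'0 : 0 < s' := by rw [hs']; linarith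
    have hs'lt : s' < κ / (t + v k) := by rw [hs']; linarith
    have hlams' : lam < s' := by rw [hs']; linarith
    have hθ1 : t + v k < κ / s' := by
      rw [lt_div_iff₀ hs'0]
      have h6 := (lt_div_iff₀ hden0).1 hs'lt
      nlinarith
    have hθt : t < κ / s' - v k := by linarith
    have hθtpos : 0 < κ / s' - v k := lt_of_le_of_lt ht hθt
    set θ : ℝ := (κ / s' - v k) / cn with hθ
    have hθ0 : 0 < θ := div_pos hθtpos hcn0
    set ρ' : ℝ := θ ^ (1 / (n:ℝ)) with hρ'
    have hρ'0 : 0 < ρ' := Real.rpow_pos_of_pos hθ0 _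
    have hρ'n : ρ' ^ n = θ := by
      rw [hρ', ← Real.rpow_natCast (θ ^ (1/(n:ℝ))) n, ← Real.rpow_mul hθ0.le, one_div,
        inv_mul_cancel₀ (by exact_mod_cast hn.ne' : (n:ℝ) ≠ 0), Real.rpow_one]
    have hsubset : Metric.ball (0:En) ρ' ⊆
        {x : En | l < (‖hlMax (g k) x‖₊ : ℝ≥0∞)} := by
      intro y hy
      rw [mem_ball_zero_iff] at hy
      have h1 : w y < κ / s' - v k := by
        have hc1 : ‖y‖ ^ n * cn < ρ' ^ n * cn :=
          mul_lt_mul_of_pos_right (pow_lt_pow_left₀ hy (norm_nonneg y) hn.ne') hcn0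
        have hc2 : ρ' ^ n * cn = κ / s' - v k := by
          rw [hρ'n, hθ, div_mul_cancel₀ _ hcn0.ne']
        calc w y = ‖y‖ ^ n * cn := by rw [hw]
          _ < ρ' ^ n * cn := hc1
          _ = κ / s' - v k := hc2
      have h2 : s' < κ / (w y + v k) := by
        rw [lt_div_iff₀ (add_pos_of_nonneg_of_pos (hw0 y) (hv0 k))]
        have h3 : w y + v k < κ / s' := by linarith
        have h4 := (lt_div_iff₀ hs'0).1 h3
        nlinarith
      have h5 : lam < hlMax (g k) y :=
        lt_of_lt_of_le (lt_trans hlams' h2) (hlow k y)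
      rw [Set.mem_setOf_eq, ← enorm_eq_nnnorm, Real.enorm_eq_ofReal_abs,
        abs_of_nonneg (aux_hlMax_nonneg _ y)]
      calc l = ENNReal.ofReal lam := (ENNReal.ofReal_toReal hltop).symm
        _ < ENNReal.ofReal (hlMax (g k) y) := by
            rw [ENNReal.ofReal_lt_ofReal_iff_of_nonneg hlam0]
            exact h5
    have hvol' : ENNReal.ofReal t < volume (Metric.ball (0:En) ρ') := by
      have hveq : volume (Metric.ball (0:En) ρ') = ENNReal.ofReal (ρ' ^ n * cn) := by
        rw [aux_volume_ball hn, ← hcn, ← ENNReal.ofReal_pow hρ'0.le,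
          ← ENNReal.ofReal_mul (by positivity)]
      rw [hveq, hρ'n, hθ, div_mul_cancel₀ _ hcn0.ne',
        ENNReal.ofReal_lt_ofReal_iff_of_nonneg ht]
      exact hθt
    exact lt_of_lt_of_le hvol' (measure_mono hsubset)
  -- pass to the representation space
  set Dom : Set ℝ := {t : ℝ | 0 < t ∧ ENNReal.ofReal t < volume (Set.univ : Set En)}
    with hDomdef
  have hDomMeas : MeasurableSet Dom := by
    have heq : Dom = {t : ℝ | 0 < t} ∩
        {t : ℝ | ENNReal.ofReal t < volume (Set.univ : Set En)} := rfl
    rw [heq]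
    exact (measurableSet_lt measurable_const measurable_id).inter
      (ENNReal.measurable_ofReal measurableSet_Iio)
  have hmeasInterval : (intervalM (volume (Set.univ : Set En))) = volume.restrict Dom := rfl
  have hae : ∀ (P : ℝ → Prop), (∀ t ∈ Dom, P t) →
      ∀ᵐ t ∂(intervalM (volume (Set.univ : Set En))), P t := by
    intro P hP
    rw [hmeasInterval]
    exact (ae_restrict_iff' hDomMeas).2 (ae_of_all _ hP)
  set u : ℕ → ℝ → ℝ := fun k t => if 0 < t then κ / (t + v k) else 0 with hu
  set ulim : ℝ → ℝ := fun t => if 0 < t then κ / t else 0 with hulim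
  have humeas : ∀ k, Measurable (u k) := by
    intro k
    exact Measurable.ite (measurableSet_lt measurable_const measurable_id)
      (measurable_const.div (measurable_id.add_const (v k))) measurable_const
  have hukmono : ∀ k t, 0 ≤ u k t ∧ u k t ≤ u (k+1) t := by
    intro k t
    by_cases ht : 0 < t
    · have e1 : u k t = κ / (t + v k) := if_pos ht
      have e2 : u (k+1) t = κ / (t + v (k+1)) := if_pos ht
      rw [e1, e2]
      constructor
      · exact div_nonneg hκ0.le (add_pos ht (hv0 k)).le
      · exact div_le_div_of_nonneg_left hκ0.le (add_pos ht (hv0 (k+1)))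
          (by linarith [hvanti k (k+1) (Nat.le_succ k)])
    · have e1 : u k t = 0 := if_neg ht
      have e2 : u (k+1) t = 0 := if_neg ht
      rw [e1, e2]
      exact ⟨le_rfl, le_rfl⟩
  have huktend : ∀ t, Filter.Tendsto (fun k => u k t) Filter.atTop (nhds (ulim t)) := by
    intro t
    by_cases ht : 0 < t
    · have e2 : ulim t = κ / t := if_pos ht
      have e1 : ∀ k, u k t = κ / (t + v k) := fun k => if_pos ht
      simp only [e1, e2]
      have hadd : Filter.Tendsto (fun k => t + v k) Filter.atTop (nhds t) := by
        have h9 := hvtend.const_add t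
        rwa [add_zero] at h9
      exact tendsto_const_nhds.div hadd ht.ne'
    · have e2 : ulim t = 0 := if_neg ht
      have e1 : ∀ k, u k t = 0 := fun k => if_neg ht
      simp only [e1, e2]
      exact tendsto_const_nhds
  have hNuk : ∀ k, Ybar.N (u k) ≤ (C0 : ℝ≥0∞) * B := by
    intro k
    have hlat : Ybar.N (u k) ≤ Ybar.N (rearrFun volume (hlMax (g k))) := by
      apply Ybar.lattice _ _ ((humeas k).aemeasurable)
      apply hae
      intro t htDom
      have ht0 : 0 < t := htDom.1
      have h1 : u k t = κ / (t + v k) := if_pos ht0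
      have h2 : κ / (t + v k) ≤ rearrFun volume (hlMax (g k)) t := by
        have h3 := hrlow k t ht0.le
        have h4 := hrup k t
        rw [rearrFun]
        calc κ / (t + v k) = (ENNReal.ofReal (κ / (t + v k))).toReal :=
            (ENNReal.toReal_ofReal (div_nonneg hκ0.le (add_pos ht0 (hv0 k)).le)).symm
          _ ≤ (rearr volume (hlMax (g k)) (ENNReal.ofReal t)).toReal :=
            ENNReal.toReal_mono ((h4.trans_lt ENNReal.ofReal_lt_top).ne) h3
      rw [h1, abs_of_nonneg (div_nonneg hκ0.le (add_pos ht0 (hv0 k)).le),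
        abs_of_nonneg (show (0:ℝ) ≤ rearrFun volume (hlMax (g k)) t from ENNReal.toReal_nonneg)]
      exact h2
    calc Ybar.N (u k) ≤ Ybar.N (rearrFun volume (hlMax (g k))) := hlat
      _ = Y.N (hlMax (g k)) := (hrep _).symm
      _ ≤ (C0:ℝ≥0∞) * X.N (g k) := hC0 _
      _ ≤ (C0:ℝ≥0∞) * B := mul_le_mul_right (hNg k) _
  have hsupfin : (⨆ k, Ybar.N (u k)) < ⊤ :=
    lt_of_le_of_lt (iSup_le hNuk)
      (ENNReal.mul_lt_top ENNReal.coe_lt_top (lt_top_iff_ne_top.2 hBtop))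
  have hNulim : Ybar.N ulim ≤ (CF:ℝ≥0∞) * ((C0:ℝ≥0∞) * B) := by
    have hF := hFatou u ulim (fun k => (humeas k).aemeasurable)
      (fun k => ae_of_all _ (fun t => hukmono k t))
      (ae_of_all _ huktend) hsupfin
    exact le_trans hF (mul_le_mul_right (iSup_le hNuk) _)
  -- conclusion
  set D : ℝ≥0∞ := (CF:ℝ≥0∞) * ((C0:ℝ≥0∞) * B) with hD
  have hDtop : D ≠ ⊤ :=
    ENNReal.mul_ne_top ENNReal.coe_ne_top (ENNReal.mul_ne_top ENNReal.coe_ne_top hBtop)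
  have hκinvtop : (ENNReal.ofReal κ)⁻¹ ≠ ⊤ :=
    ENNReal.inv_ne_top.2 (ENNReal.ofReal_pos.2 hκ0).ne'
  have hfin' : D * (ENNReal.ofReal κ)⁻¹ ≠ ⊤ := ENNReal.mul_ne_top hDtop hκinvtop
  refine ⟨1 + (D * (ENNReal.ofReal κ)⁻¹).toNNReal, fun f => ?_⟩
  by_cases hW : weakNorm volume 1 f = ⊤
  · rw [hW, ENNReal.mul_top]
    · exact le_top
    · exact ENNReal.coe_ne_zero.2 (add_pos_of_pos_of_nonneg one_pos zero_le).ne'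
  · set W := weakNorm volume 1 f with hWdef
    have hdom : ∀ t ∈ Dom, |rearrFun volume f t| ≤ |(W.toReal / κ) * ulim t| := by
      intro t htDom
      have ht0 : 0 < t := htDom.1
      have h1 : rearrFun volume f t ≤ W.toReal / t := by
        rw [rearrFun]
        have h2 := aux_rearr_le_weak f hW ht0
        calc (rearr volume f (ENNReal.ofReal t)).toReal
            ≤ (ENNReal.ofReal (W.toReal / t)).toReal :=
              ENNReal.toReal_mono ENNReal.ofReal_ne_top h2
          _ = W.toReal / t := ENNReal.toReal_ofReal (by positivity)
      have h3 : (W.toReal / κ) * ulim t = W.toReal / t := by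
        have e2 : ulim t = κ / t := if_pos ht0
        rw [e2]
        field_simp
      rw [h3, abs_of_nonneg (show (0:ℝ) ≤ rearrFun volume f t from ENNReal.toReal_nonneg),
        abs_of_nonneg (by positivity : (0:ℝ) ≤ W.toReal / t)]
      exact h1
    have hYf : Y.N f ≤ ENNReal.ofReal (W.toReal / κ) * Ybar.N ulim := by
      rw [hrep f]
      have hlat := Ybar.lattice (rearrFun volume f) (fun t => (W.toReal / κ) * ulim t)
        ((aux_measurable_rearrFun f).aemeasurable) (hae _ hdom)
      have hsm := Ybar.smul (W.toReal / κ) ulim (lt_of_le_of_lt hNulim (lt_top_iff_ne_top.2 hDtop))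
      calc Ybar.N (rearrFun volume f) ≤ Ybar.N (fun t => (W.toReal / κ) * ulim t) := hlat
        _ = ENNReal.ofReal |W.toReal / κ| * Ybar.N ulim := hsm
        _ = ENNReal.ofReal (W.toReal / κ) * Ybar.N ulim := by
            rw [abs_of_nonneg (by positivity)]
    calc Y.N f ≤ ENNReal.ofReal (W.toReal / κ) * Ybar.N ulim := hYf
      _ ≤ ENNReal.ofReal (W.toReal / κ) * D := mul_le_mul_right hNulim _
      _ = (ENNReal.ofReal W.toReal * (ENNReal.ofReal κ)⁻¹) * D := by
          rw [ENNReal.ofReal_div_of_pos hκ0, div_eq_mul_inv]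
      _ = W * (D * (ENNReal.ofReal κ)⁻¹) := by rw [ENNReal.ofReal_toReal hW]; ring
      _ ≤ W * ((1 + (D * (ENNReal.ofReal κ)⁻¹).toNNReal : ℝ≥0) : ℝ≥0∞) := by
          apply mul_le_mul_right
          calc D * (ENNReal.ofReal κ)⁻¹
              = (((D * (ENNReal.ofReal κ)⁻¹).toNNReal : ℝ≥0) : ℝ≥0∞) :=
                (ENNReal.coe_toNNReal hfin').symm
            _ ≤ _ := by exact_mod_cast le_add_self
      _ = ((1 + (D * (ENNReal.ofReal κ)⁻¹).toNNReal : ℝ≥0) : ℝ≥0∞) * W := mul_comm _ _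

end AuxPart2

/-- if `X` is an r.i. quasi-Banach lattice over `ℝⁿ` containing simple
functions with `X ↪ L¹(ℝⁿ)` and `limsup_{t→0⁺} t⁻¹ φ_X(t) < ∞`, then `L^{1,∞}(ℝⁿ)` is the
optimal target for `(M, X, 𝒞)` with `M` the Hardy–Littlewood maximal operator and `𝒞` the
Fatou-representable r.i. quasi-Banach lattices. -/
theorem maximal_optimal_weak_target
    (n : ℕ)
    (X : QBLattice (volume : Measure (EuclideanSpace ℝ (Fin n))))
    (hXri : X.RearrInv)
    (hXsimple : ∀ s : EuclideanSpace ℝ (Fin n) → ℝ,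
      NestedSimple (volume : Measure (EuclideanSpace ℝ (Fin n))) s → X.N s < ⊤)
    (hXL1 : ∃ C : ℝ≥0, ∀ f : EuclideanSpace ℝ (Fin n) → ℝ,
      (∫⁻ x, (‖f x‖₊ : ℝ≥0∞)) ≤ C * X.N f)
    (hfund : Filter.limsup (fun t : ℝ≥0∞ => t ^ (-(1 : ℝ)) * X.fund t)
      (nhdsWithin 0 (Set.Ioi 0)) < ⊤) :
    (∃ C : ℝ≥0, ∀ f : EuclideanSpace ℝ (Fin n) → ℝ,
      weakNorm (volume : Measure (EuclideanSpace ℝ (Fin n))) 1 (hlMax f) ≤ C * X.N f) ∧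
    ∀ Y : QBLattice (volume : Measure (EuclideanSpace ℝ (Fin n))),
      Y.RearrInv → FatouRepresentable Y →
      (∃ C : ℝ≥0, ∀ f : EuclideanSpace ℝ (Fin n) → ℝ, Y.N (hlMax f) ≤ C * X.N f) →
      ∃ C : ℝ≥0, ∀ f : EuclideanSpace ℝ (Fin n) → ℝ,
        Y.N f ≤ C * weakNorm volume 1 f := by
  rcases Nat.eq_zero_or_pos n with rfl | hn
  · exact (aux_nzero X hfund).elim
  · exact ⟨aux_part1 hn X hXL1, fun Y _ hYrep hb => aux_part2 hn X hXri hfund Y hYrep hb⟩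
end
end

section
/- Let n ∈ ℕ and α ∈ (0,n), and let I_α denote the Riesz potential on ℝⁿ. Let X be a rearrangement-invariant quasi-Banach lattice over ℝⁿ (with Lebesgue measure) containing simple functions such that X ↪ L^{n/α,1}(ℝⁿ) continuously and limsup_{t→∞} t^{-α/n} φ_X(t) < ∞. Then L^∞(ℝⁿ) is the optimal target for (I_α, X, 𝒞), where 𝒞 is the collection of all rearrangement-invariant quasi-Banach lattices over ℝⁿ that are Fatou-representable: I_α : X → L^∞(ℝⁿ) is bounded, and for every Y ∈ 𝒞 such that I_α : X → Y is bounded, L^∞(ℝⁿ) ↪ Y. -/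
open MeasureTheory Set Filter
open scoped ENNReal NNReal Classical Topology

noncomputable section

variable {α β : Type*} [MeasurableSpace α] [MeasurableSpace β]

namespace RieszAux

open Metric

variable {n : ℕ} {γ : ℝ}

local notation "E'" => EuclideanSpace ℝ (Fin n)

lemma vol_ball (hn : 0 < n) (x : E') {r : ℝ} (hr : 0 ≤ r) :
    volume (ball x r) = ENNReal.ofReal (r ^ n) * volume (ball (0 : E') 1) := by
  haveI : Nonempty (Fin n) := ⟨⟨0, hn⟩⟩
  rw [Measure.addHaar_ball _ _ hr, finrank_euclideanSpace_fin]

lemma vol_closedBall (hn : 0 < n) (x : E') {r : ℝ} (hr : 0 ≤ r) :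
    volume (closedBall x r) = ENNReal.ofReal (r ^ n) * volume (ball (0 : E') 1) := by
  haveI : Nonempty (Fin n) := ⟨⟨0, hn⟩⟩
  rw [Measure.addHaar_closedBall _ _ hr, finrank_euclideanSpace_fin]

lemma rpow_algebra {γ r : ℝ} {n : ℕ} (hr : (0:ℝ) < r) (j : ℕ) :
    ((2:ℝ) ^ (-((j:ℝ)+1)) * r) ^ (γ - n) * ((2:ℝ) ^ (-(j:ℝ)) * r) ^ (n:ℝ)
      = (2:ℝ) ^ ((n:ℝ) - γ) * ((2:ℝ) ^ (-γ)) ^ j * r ^ γ := by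
  have h2 : (0:ℝ) < 2 := by norm_num
  rw [Real.mul_rpow (by positivity) hr.le, Real.mul_rpow (by positivity) hr.le,
    ← Real.rpow_natCast ((2:ℝ) ^ (-γ)) j,
    ← Real.rpow_mul h2.le, ← Real.rpow_mul h2.le, ← Real.rpow_mul h2.le,
    mul_mul_mul_comm, ← Real.rpow_add h2, ← Real.rpow_add hr, ← Real.rpow_add h2]
  congr 2 <;> ring

lemma exists_dyadic {t r : ℝ} (ht : 0 < t) (htr : t < r) :
    ∃ j : ℕ, (2:ℝ) ^ (-((j:ℝ)+1)) * r < t ∧ t ≤ (2:ℝ) ^ (-(j:ℝ)) * r := by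
  have hr : 0 < r := ht.trans htr
  obtain ⟨m, hm⟩ := exists_mem_Ioc_zpow (x := t / r) (y := 2) (by positivity) one_lt_two
  have hm1 : t / r < 1 := (div_lt_one hr).2 htr
  have hmneg : m + 1 ≤ 0 := by
    by_contra h
    push_neg at h
    have h1 : (1:ℝ) ≤ (2:ℝ) ^ m := one_le_zpow₀ one_le_two (by omega)
    have := h1.trans_lt hm.1
    linarith
  have htc : ((-(m+1)).toNat : ℤ) = -(m+1) := Int.toNat_of_nonneg (by omega)
  have hcastR : ((-(m+1)).toNat : ℝ) = -((m:ℝ)+1) := by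
    exact_mod_cast congrArg (Int.cast : ℤ → ℝ) htc
  refine ⟨(-(m+1)).toNat, ?_, ?_⟩
  · have hcast : -(((-(m+1)).toNat : ℝ) + 1) = (m : ℝ) := by rw [hcastR]; ring
    rw [hcast, Real.rpow_intCast 2 m]
    calc (2:ℝ) ^ m * r < (t / r) * r := mul_lt_mul_of_pos_right hm.1 hr
      _ = t := div_mul_cancel₀ t hr.ne'
  · have hcast : -(((-(m+1)).toNat : ℝ)) = ((m+1 : ℤ) : ℝ) := by rw [hcastR]; push_cast; ring
    rw [hcast, Real.rpow_intCast 2 (m+1)]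
    calc t = (t / r) * r := (div_mul_cancel₀ t hr.ne').symm
      _ ≤ (2:ℝ) ^ (m+1) * r := mul_le_mul_of_nonneg_right hm.2 hr.le

lemma kernel_ball_bound (hn : 0 < n) (hγ0 : 0 < γ) (hγn : γ < n) :
    ∃ c : ℝ≥0∞, c < ⊤ ∧ ∀ (x : E') (r : ℝ), 0 < r →
      ∫⁻ y in ball x r, ENNReal.ofReal (‖x - y‖ ^ (γ - n)) ∂volume
        ≤ c * ENNReal.ofReal (r ^ γ) := by
  haveI : Nonempty (Fin n) := ⟨⟨0, hn⟩⟩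
  set V₁ : ℝ≥0∞ := volume (ball (0 : E') 1) with hV₁
  have hV₁top : V₁ < ⊤ := measure_ball_lt_top
  have hq1 : ENNReal.ofReal ((2:ℝ) ^ (-γ)) < 1 := by
    rw [ENNReal.ofReal_lt_one]
    exact Real.rpow_lt_one_of_one_lt_of_neg one_lt_two (neg_lt_zero.2 hγ0)
  refine ⟨ENNReal.ofReal ((2:ℝ) ^ ((n:ℝ) - γ)) * V₁ * (1 - ENNReal.ofReal ((2:ℝ) ^ (-γ)))⁻¹,
    ?_, ?_⟩
  · apply ENNReal.mul_lt_top (ENNReal.mul_lt_top ENNReal.ofReal_lt_top hV₁top)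
    rw [ENNReal.inv_lt_top]
    exact tsub_pos_of_lt hq1
  intro x r hr
  set k : E' → ℝ≥0∞ := fun y => ENNReal.ofReal (‖x - y‖ ^ (γ - n)) with hk
  set ρ : ℕ → ℝ := fun j => (2:ℝ) ^ (-(j:ℝ)) * r with hρ
  have hρpos : ∀ j, 0 < ρ j := fun j => by
    apply mul_pos _ hr; positivity
  set A : ℕ → Set E' := fun j => closedBall x (ρ j) \ ball x (ρ (j+1)) with hA
  have hcover : ball x r ⊆ {x} ∪ ⋃ j, A j := by
    intro y hy
    rcases eq_or_ne y x with h | h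
    · exact Or.inl (by simp [h])
    right
    have ht : 0 < dist y x := dist_pos.2 h
    obtain ⟨j, hj1, hj2⟩ := exists_dyadic ht (mem_ball.1 hy)
    refine mem_iUnion.2 ⟨j, ?_, ?_⟩
    · exact mem_closedBall.2 hj2
    · intro hmem
      have := mem_ball.1 hmem
      have hcast : ρ (j+1) = (2:ℝ) ^ (-((j:ℝ)+1)) * r := by
        simp only [hρ]; push_cast; ring_nf
      rw [hcast] at this
      linarith
  have hsingle : ∫⁻ y in ({x} : Set E'), k y ∂volume = 0 := by
    apply setLIntegral_measure_zero
    exact measure_singleton x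
  have hannulus : ∀ j : ℕ, ∫⁻ y in A j, k y ∂volume
      ≤ ENNReal.ofReal ((2:ℝ) ^ ((n:ℝ) - γ) * ((2:ℝ) ^ (-γ)) ^ j * r ^ γ) * V₁ := by
    intro j
    have hbound : ∀ y ∈ A j, k y ≤ ENNReal.ofReal ((ρ (j+1)) ^ (γ - n)) := by
      intro y hy
      apply ENNReal.ofReal_le_ofReal
      apply Real.rpow_le_rpow_of_nonpos (hρpos (j+1)) _ (by linarith)
      have : ¬ dist y x < ρ (j+1) := fun hc => hy.2 (mem_ball.2 hc)
      rw [← dist_eq_norm, dist_comm]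
      linarith [not_lt.1 this]
    calc ∫⁻ y in A j, k y ∂volume
        ≤ ∫⁻ _ in A j, ENNReal.ofReal ((ρ (j+1)) ^ (γ - n)) ∂volume :=
          setLIntegral_mono' (measurableSet_closedBall.diff measurableSet_ball) hbound
      _ = ENNReal.ofReal ((ρ (j+1)) ^ (γ - n)) * volume (A j) := setLIntegral_const _ _
      _ ≤ ENNReal.ofReal ((ρ (j+1)) ^ (γ - n)) * volume (closedBall x (ρ j)) := by
          apply mul_le_mul_right (measure_mono diff_subset)
      _ = ENNReal.ofReal ((ρ (j+1)) ^ (γ - n)) * (ENNReal.ofReal ((ρ j) ^ n) * V₁) := by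
          rw [vol_closedBall hn x (hρpos j).le]
      _ = ENNReal.ofReal ((2:ℝ) ^ ((n:ℝ) - γ) * ((2:ℝ) ^ (-γ)) ^ j * r ^ γ) * V₁ := by
          rw [← mul_assoc, ← ENNReal.ofReal_mul (by positivity)]
          congr 2
          have h1 : (ρ j) ^ n = (ρ j) ^ (n : ℝ) := (Real.rpow_natCast _ n).symm
          have h2 : ρ (j+1) = (2:ℝ) ^ (-((j:ℝ)+1)) * r := by
            simp only [hρ]; push_cast; ring_nf
          rw [h1, h2, hρ, rpow_algebra hr j]
  calc ∫⁻ y in ball x r, k y ∂volume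
      ≤ ∫⁻ y in {x} ∪ ⋃ j, A j, k y ∂volume := lintegral_mono_set hcover
    _ ≤ (∫⁻ y in ({x} : Set E'), k y ∂volume) + ∫⁻ y in ⋃ j, A j, k y ∂volume :=
        lintegral_union_le _ _ _
    _ = ∫⁻ y in ⋃ j, A j, k y ∂volume := by rw [hsingle, zero_add]
    _ ≤ ∑' j, ∫⁻ y in A j, k y ∂volume := lintegral_iUnion_le _ _
    _ ≤ ∑' j, ENNReal.ofReal ((2:ℝ) ^ ((n:ℝ) - γ) * ((2:ℝ) ^ (-γ)) ^ j * r ^ γ) * V₁ :=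
        ENNReal.tsum_le_tsum hannulus
    _ = ENNReal.ofReal ((2:ℝ) ^ ((n:ℝ) - γ)) * V₁ * (1 - ENNReal.ofReal ((2:ℝ) ^ (-γ)))⁻¹ *
        ENNReal.ofReal (r ^ γ) := by
        have hterm : ∀ j : ℕ,
            ENNReal.ofReal ((2:ℝ) ^ ((n:ℝ) - γ) * ((2:ℝ) ^ (-γ)) ^ j * r ^ γ) * V₁
            = (ENNReal.ofReal ((2:ℝ) ^ ((n:ℝ) - γ)) * ENNReal.ofReal (r ^ γ) * V₁) *
              (ENNReal.ofReal ((2:ℝ) ^ (-γ))) ^ j := by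
          intro j
          rw [ENNReal.ofReal_mul (by positivity), ENNReal.ofReal_mul (by positivity),
            ENNReal.ofReal_pow (by positivity)]
          ring
        simp_rw [hterm]
        rw [ENNReal.tsum_mul_left, ENNReal.tsum_geometric]
        ring

lemma kernel_set_bound (hn : 0 < n) (hγ0 : 0 < γ) (hγn : γ < n) :
    ∃ c : ℝ≥0∞, c < ⊤ ∧ ∀ (x : E') (A : Set E'), MeasurableSet A →
      ∫⁻ y in A, ENNReal.ofReal (‖x - y‖ ^ (γ - n)) ∂volume
        ≤ c * (volume A) ^ (γ / (n:ℝ)) := by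
  obtain ⟨c, hc, hball⟩ := kernel_ball_bound hn hγ0 hγn
  have hnR : (0:ℝ) < n := Nat.cast_pos.2 hn
  refine ⟨c + 1, ENNReal.add_lt_top.2 ⟨hc, ENNReal.one_lt_top⟩, ?_⟩
  intro x A hAmeas
  set k : E' → ℝ≥0∞ := fun y => ENNReal.ofReal (‖x - y‖ ^ (γ - n)) with hk
  rcases eq_or_ne (volume A) 0 with hA0 | hA0
  · have : volume.restrict A = 0 := Measure.restrict_eq_zero.2 hA0
    rw [this, lintegral_zero_measure]
    exact zero_le
  rcases eq_or_ne (volume A) ⊤ with hAtop | hAtop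
  · rw [hAtop, ENNReal.top_rpow_of_pos (by positivity), ENNReal.mul_top (by simp)]
    exact le_top
  set m : ℝ≥0∞ := volume A with hm
  have hmt : 0 < m.toReal := ENNReal.toReal_pos hA0 hAtop
  set r : ℝ := m.toReal ^ ((n:ℝ)⁻¹) with hrdef
  have hrpos : 0 < r := Real.rpow_pos_of_pos hmt _
  have hofm : ENNReal.ofReal m.toReal = m := ENNReal.ofReal_toReal hAtop
  have hr_rpow : ∀ z : ℝ, ENNReal.ofReal (r ^ z) = m ^ ((n:ℝ)⁻¹ * z) := by
    intro z
    rw [hrdef, ← Real.rpow_mul hmt.le, ← ENNReal.ofReal_rpow_of_pos hmt, hofm]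
  have h1 : ∫⁻ y in A ∩ ball x r, k y ∂volume ≤ c * m ^ (γ / (n:ℝ)) := by
    calc ∫⁻ y in A ∩ ball x r, k y ∂volume ≤ ∫⁻ y in ball x r, k y ∂volume :=
          lintegral_mono_set inter_subset_right
      _ ≤ c * ENNReal.ofReal (r ^ γ) := hball x r hrpos
      _ = c * m ^ (γ / (n:ℝ)) := by rw [hr_rpow γ, inv_mul_eq_div]
  have h2 : ∫⁻ y in A \ ball x r, k y ∂volume ≤ m ^ (γ / (n:ℝ)) := by
    have hbound : ∀ y ∈ A \ ball x r, k y ≤ ENNReal.ofReal (r ^ (γ - n)) := by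
      intro y hy
      apply ENNReal.ofReal_le_ofReal
      apply Real.rpow_le_rpow_of_nonpos hrpos _ (by linarith)
      have : ¬ dist y x < r := fun hc => hy.2 (mem_ball.2 hc)
      rw [← dist_eq_norm, dist_comm]
      linarith [not_lt.1 this]
    calc ∫⁻ y in A \ ball x r, k y ∂volume
        ≤ ∫⁻ _ in A \ ball x r, ENNReal.ofReal (r ^ (γ - n)) ∂volume :=
          setLIntegral_mono' (hAmeas.diff measurableSet_ball) hbound
      _ = ENNReal.ofReal (r ^ (γ - n)) * volume (A \ ball x r) := setLIntegral_const _ _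
      _ ≤ ENNReal.ofReal (r ^ (γ - n)) * m := mul_le_mul_right (measure_mono diff_subset) _
      _ = m ^ (γ / (n:ℝ)) := by
          rw [hr_rpow (γ - n)]
          nth_rewrite 2 [← ENNReal.rpow_one m]
          rw [← ENNReal.rpow_add _ _ hA0 hAtop]
          congr 1
          field_simp
          ring
  calc ∫⁻ y in A, k y ∂volume
      = ∫⁻ y in (A ∩ ball x r) ∪ (A \ ball x r), k y ∂volume := by
        rw [inter_union_diff]
    _ ≤ (∫⁻ y in A ∩ ball x r, k y ∂volume) + ∫⁻ y in A \ ball x r, k y ∂volume :=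
        lintegral_union_le _ _ _
    _ ≤ c * m ^ (γ / (n:ℝ)) + m ^ (γ / (n:ℝ)) := add_le_add h1 h2
    _ = (c + 1) * m ^ (γ / (n:ℝ)) := by rw [add_mul, one_mul]

lemma lorentz_eq (hn : 0 < n) (f : α → ℝ) (μ : Measure α) :
    lorentzNorm μ ((n:ℝ)/γ) 1 f
      = ENNReal.ofReal ((n:ℝ)/γ) * ∫⁻ s in Set.Ioi (0:ℝ), μ {x | s < |f x|} ^ (γ/(n:ℝ)) := by
  have hnR : (0:ℝ) < n := Nat.cast_pos.2 hn
  rw [lorentzNorm]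
  rw [show (1:ℝ)/(1:ℝ) = 1 by norm_num, ENNReal.rpow_one]
  congr 1
  refine setLIntegral_congr_fun measurableSet_Ioi ?_
  intro s hs
  have hs' : (0:ℝ) < s := hs
  beta_reduce
  rw [show (1:ℝ) / ((n:ℝ)/γ) = γ/(n:ℝ) by rw [one_div_div], ENNReal.rpow_one]
  rw [mul_comm (ENNReal.ofReal s) _, mul_assoc,
    ENNReal.mul_inv_cancel (by simpa using hs') ENNReal.ofReal_ne_top, mul_one]

lemma riesz_pointwise (f : E' → ℝ) (x : E') :
    (‖riesz n γ f x‖₊ : ℝ≥0∞)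
      ≤ ENNReal.ofReal |Real.pi ^ ((n : ℝ) / 2) * 2 ^ γ * Real.Gamma (γ / 2) /
          Real.Gamma (((n : ℝ) - γ) / 2)| *
        ∫⁻ y, (‖f y‖₊ : ℝ≥0∞) * ENNReal.ofReal (‖x - y‖ ^ (γ - (n:ℝ))) ∂volume := by
  rw [riesz]
  rw [nnnorm_mul, ENNReal.coe_mul, ← enorm_eq_nnnorm, Real.enorm_eq_ofReal_abs]
  apply mul_le_mul_right
  refine le_trans (enorm_integral_le_lintegral_enorm _) ?_
  apply lintegral_mono
  intro y
  show (‖f y * ‖x - y‖ ^ (γ - (n:ℝ))‖₊ : ℝ≥0∞) ≤ _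
  rw [nnnorm_mul, ENNReal.coe_mul]
  apply mul_le_mul_right
  rw [← enorm_eq_nnnorm, Real.enorm_eq_ofReal (Real.rpow_nonneg (norm_nonneg _) _)]

lemma lintegral_kernel_le (hn : 0 < n) (hγ0 : 0 < γ) (hγn : γ < n) :
    ∃ c : ℝ≥0∞, c < ⊤ ∧ ∀ (g : E' → ℝ), Measurable g → ∀ x : E',
      ∫⁻ y, (‖g y‖₊ : ℝ≥0∞) * ENNReal.ofReal (‖x - y‖ ^ (γ - (n:ℝ))) ∂volume
        ≤ c * ∫⁻ s in Set.Ioi (0:ℝ), (volume {a | s < |g a|}) ^ (γ/(n:ℝ)) := by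
  obtain ⟨c, hc, hset⟩ := kernel_set_bound hn hγ0 hγn
  refine ⟨c, hc, ?_⟩
  intro g hg x
  set k : E' → ℝ≥0∞ := fun y => ENNReal.ofReal (‖x - y‖ ^ (γ - (n:ℝ))) with hkdef
  have hkmeas : Measurable k := by fun_prop
  set ν : Measure E' := volume.withDensity k with hν
  have hgm : Measurable fun y => (‖g y‖₊ : ℝ≥0∞) := hg.nnnorm.coe_nnreal_ennreal
  have step1 : ∫⁻ y, (‖g y‖₊ : ℝ≥0∞) * k y ∂volume = ∫⁻ y, (‖g y‖₊ : ℝ≥0∞) ∂ν := by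
    rw [hν, lintegral_withDensity_eq_lintegral_mul volume hkmeas hgm]
    exact lintegral_congr fun y => (mul_comm _ _)
  have step2 : ∫⁻ y, (‖g y‖₊ : ℝ≥0∞) ∂ν = ∫⁻ s in Set.Ioi (0:ℝ), ν {a | s < |g a|} := by
    have := lintegral_eq_lintegral_meas_lt ν
      (Filter.Eventually.of_forall fun y => abs_nonneg (g y)) hg.abs.aemeasurable
    simp_rw [← enorm_eq_nnnorm, Real.enorm_eq_ofReal_abs]
    exact this
  rw [step1, step2]
  have step3 : ∀ s : ℝ, ν {a | s < |g a|} ≤ c * (volume {a | s < |g a|}) ^ (γ/(n:ℝ)) := by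
    intro s
    have hAm : MeasurableSet {a : E' | s < |g a|} := measurableSet_lt measurable_const hg.abs
    rw [hν, withDensity_apply _ hAm]
    exact hset x _ hAm
  calc ∫⁻ s in Set.Ioi (0:ℝ), ν {a | s < |g a|}
      ≤ ∫⁻ s in Set.Ioi (0:ℝ), c * (volume {a | s < |g a|}) ^ (γ/(n:ℝ)) :=
        lintegral_mono fun s => step3 s
    _ = c * ∫⁻ s in Set.Ioi (0:ℝ), (volume {a | s < |g a|}) ^ (γ/(n:ℝ)) :=
        lintegral_const_mul' _ _ hc.ne


lemma rearr_indicator {μ : Measure α} (B : Set α) (s : ℝ≥0∞) :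
    rearr μ (B.indicator fun _ => (1:ℝ)) s = if s < μ B then 1 else 0 := by
  have hset : ∀ l : ℝ≥0∞, {x | l < (‖B.indicator (fun _ => (1:ℝ)) x‖₊ : ℝ≥0∞)}
      = if l < 1 then B else ∅ := by
    intro l
    ext x
    by_cases hx : x ∈ B <;> by_cases hl : l < 1 <;>
      simp [Set.indicator_of_mem, Set.indicator_of_notMem, hx, hl, not_lt.1]
  rw [rearr]
  simp_rw [hset, apply_ite μ, measure_empty]
  by_cases h : s < μ B
  · rw [if_pos h]
    apply le_antisymm
    · apply sInf_le
      simp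
    · apply le_sInf
      intro b hb
      by_contra hb1
      push_neg at hb1
      rw [Set.mem_setOf_eq, if_pos hb1] at hb
      exact absurd (lt_of_le_of_lt hb h) (lt_irrefl _)
  · rw [if_neg h]
    apply le_antisymm _ (zero_le)
    apply sInf_le
    simp only [Set.mem_setOf_eq]
    split_ifs
    · exact not_lt.1 h
    · exact zero_le

lemma rearrFun_indicator {μ : Measure α} (B : Set α) (t : ℝ) :
    rearrFun μ (B.indicator fun _ => (1:ℝ)) t
      = if ENNReal.ofReal t < μ B then 1 else 0 := by
  rw [rearrFun, rearr_indicator]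
  split_ifs <;> simp

lemma nestedSimple_indicator {μ : Measure α} {B : Set α} (hB : MeasurableSet B)
    (hBfin : μ B < ⊤) : NestedSimple μ (B.indicator fun _ => (1:ℝ)) := by
  refine ⟨1, fun _ => 1, fun _ => B, fun _ => one_pos, fun _ => hB, fun _ => hBfin,
    fun _ _ _ => subset_rfl, ?_⟩
  funext x
  rw [Fin.sum_univ_one, one_mul]

lemma fund_eq {μ : Measure α} (X : QBLattice μ) (hXri : X.RearrInv) {B : Set α}
    (hB : MeasurableSet B) :
    X.fund (μ B) = X.N (B.indicator fun _ => (1:ℝ)) := by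
  apply le_antisymm
  · exact iInf_le_of_le B (iInf_le_of_le hB (iInf_le _ rfl))
  · refine le_iInf fun E => le_iInf fun hE => le_iInf fun hvol => ?_
    apply le_of_eq
    apply hXri
    funext s
    rw [rearr_indicator, rearr_indicator, hvol]

lemma rearrFun_measurable (μ : Measure α) (f : α → ℝ) : Measurable (rearrFun μ f) := by
  have hanti : Antitone (fun t : ℝ => rearr μ f (ENNReal.ofReal t)) := by
    intro s t hst
    apply sInf_le_sInf
    intro l hl
    exact le_trans hl (ENNReal.ofReal_le_ofReal hst)
  exact ENNReal.measurable_toReal.comp hanti.measurable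

lemma rearr_le_linfty (μ : Measure α) (f : α → ℝ) (t : ℝ≥0∞) :
    rearr μ f t ≤ linftyNorm μ f := by
  apply sInf_le
  show μ {x | linftyNorm μ f < (‖f x‖₊ : ℝ≥0∞)} ≤ t
  have h := ENNReal.ae_le_essSup (μ := μ) (fun x => (‖f x‖₊ : ℝ≥0∞))
  have h0 : μ {x | ¬ ((‖f x‖₊ : ℝ≥0∞) ≤ linftyNorm μ f)} = 0 := ae_iff.1 h
  simp only [not_le] at h0
  rw [h0]
  exact zero_le

lemma exists_ball_vol_gt (hn : 0 < n) (b : ℝ≥0∞) (hb : b < ⊤) :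
    ∃ k₀ : ℕ, ∀ k : ℕ, k₀ ≤ k → b < volume (ball (0:E') (k:ℝ)) := by
  haveI : Nonempty (Fin n) := ⟨⟨0, hn⟩⟩
  set V₁ : ℝ≥0∞ := volume (ball (0:E') 1) with hV₁def
  have hV₁0 : 0 < V₁ := Metric.measure_ball_pos _ _ one_pos
  have hV₁top : V₁ < ⊤ := measure_ball_lt_top
  have hquot : b / V₁ < ⊤ := ENNReal.div_lt_top hb.ne hV₁0.ne'
  refine ⟨⌈(b / V₁).toReal⌉₊ + 1, fun k hk => ?_⟩
  have hk1 : 1 ≤ k := le_trans (by omega) hk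
  have hkia : (b / V₁).toReal < (k:ℝ) := by
    have h1 : (b / V₁).toReal ≤ (⌈(b / V₁).toReal⌉₊ : ℝ) := Nat.le_ceil _
    have h2 : ((⌈(b / V₁).toReal⌉₊ : ℕ) : ℝ) < ((⌈(b / V₁).toReal⌉₊ + 1 : ℕ) : ℝ) := by
      exact_mod_cast Nat.lt_succ_self _
    have h3 : ((⌈(b / V₁).toReal⌉₊ + 1 : ℕ) : ℝ) ≤ (k : ℝ) := by exact_mod_cast hk
    linarith
  have hkn : (k:ℝ) ≤ (k:ℝ)^n := le_self_pow₀ (by exact_mod_cast hk1) (by omega)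
  have hlt : b / V₁ < ENNReal.ofReal ((k:ℝ)^n) := by
    rw [ENNReal.lt_ofReal_iff_toReal_lt hquot.ne]
    linarith
  calc b = b / V₁ * V₁ := (ENNReal.div_mul_cancel hV₁0.ne' hV₁top.ne).symm
    _ < ENNReal.ofReal ((k:ℝ)^n) * V₁ := ENNReal.mul_lt_mul_left hV₁0.ne' hV₁top.ne hlt
    _ = volume (ball (0:E') (k:ℝ)) := (vol_ball hn _ (by positivity)).symm

lemma riesz_indicator_lower (hn : 0 < n) (hγ0 : 0 < γ) (hγn : γ < n) {r : ℝ} (hr : 0 < r)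
    {x : E'} (hx : x ∈ ball (0:E') r) :
    (Real.pi ^ ((n : ℝ) / 2) * 2 ^ γ * Real.Gamma (γ / 2) / Real.Gamma (((n : ℝ) - γ) / 2)) *
        ((2*r) ^ (γ - (n:ℝ)) * (volume (ball (0:E') r)).toReal)
      ≤ riesz n γ ((ball (0:E') r).indicator fun _ => (1:ℝ)) x := by
  haveI : Nonempty (Fin n) := ⟨⟨0, hn⟩⟩
  have hnγ : (0:ℝ) < (n:ℝ) - γ := by
    have : (γ:ℝ) < n := hγn
    linarith
  have hc : 0 < Real.pi ^ ((n : ℝ) / 2) * 2 ^ γ * Real.Gamma (γ / 2) /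
      Real.Gamma (((n : ℝ) - γ) / 2) := by
    apply div_pos
    · apply mul_pos (mul_pos (Real.rpow_pos_of_pos Real.pi_pos _)
        (Real.rpow_pos_of_pos two_pos _))
      exact Real.Gamma_pos_of_pos (by linarith)
    · exact Real.Gamma_pos_of_pos (by linarith)
  rw [riesz]
  apply mul_le_mul_of_nonneg_left _ hc.le
  have hint_eq : (fun y => (ball (0:E') r).indicator (fun _ => (1:ℝ)) y *
      ‖x - y‖ ^ (γ - (n:ℝ)))
      = (ball (0:E') r).indicator (fun y => ‖x - y‖ ^ (γ - (n:ℝ))) := by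
    funext y
    by_cases hy : y ∈ ball (0:E') r <;>
      simp [Set.indicator_of_mem, Set.indicator_of_notMem, hy]
  rw [hint_eq, integral_indicator measurableSet_ball]
  have hkint : IntegrableOn (fun y => ‖x - y‖ ^ (γ - (n:ℝ))) (ball (0:E') r) volume := by
    obtain ⟨c2, hc2, hset⟩ := kernel_set_bound hn hγ0 hγn
    constructor
    · apply Measurable.aestronglyMeasurable
      fun_prop
    · rw [HasFiniteIntegral]
      have heq : ∀ y : E', ‖(‖x - y‖ ^ (γ - (n:ℝ)))‖ₑ
          = ENNReal.ofReal (‖x - y‖ ^ (γ - (n:ℝ))) :=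
        fun y => Real.enorm_eq_ofReal (Real.rpow_nonneg (norm_nonneg _) _)
      simp_rw [heq]
      apply lt_of_le_of_lt (hset x _ measurableSet_ball)
      apply ENNReal.mul_lt_top hc2
      exact ENNReal.rpow_lt_top_of_nonneg (by positivity) measure_ball_lt_top.ne
  have hconst : IntegrableOn (fun _ => (2*r) ^ (γ - (n:ℝ))) (ball (0:E') r) volume := by
    apply integrableOn_const measure_ball_lt_top.ne
  have hlow : ∀ᵐ y ∂volume, y ∈ ball (0:E') r →
      (2*r) ^ (γ-(n:ℝ)) ≤ ‖x - y‖ ^ (γ-(n:ℝ)) := by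
    have hne : ∀ᵐ y : E' ∂volume, y ≠ x := by
      rw [ae_iff]
      simp only [ne_eq, not_not, Set.setOf_eq_eq_singleton]
      exact measure_singleton x
    filter_upwards [hne] with y hy hyB
    have hxy : 0 < ‖x - y‖ := by
      rw [norm_pos_iff, sub_ne_zero]
      exact fun h => hy h.symm
    apply Real.rpow_le_rpow_of_nonpos hxy _ (by linarith)
    have h1 : ‖x‖ < r := mem_ball_zero_iff.1 hx
    have h2 : ‖y‖ < r := mem_ball_zero_iff.1 hyB
    calc ‖x - y‖ ≤ ‖x‖ + ‖y‖ := norm_sub_le x y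
      _ ≤ 2*r := by linarith
  calc (2*r) ^ (γ - (n:ℝ)) * (volume (ball (0:E') r)).toReal
      = ∫ _ in ball (0:E') r, (2*r) ^ (γ-(n:ℝ)) ∂volume := by
        rw [setIntegral_const, smul_eq_mul, mul_comm, measureReal_def]
    _ ≤ ∫ y in ball (0:E') r, ‖x - y‖ ^ (γ-(n:ℝ)) ∂volume :=
        setIntegral_mono_on_ae hconst hkint measurableSet_ball hlow


end RieszAux

/-- if `X` is an r.i. quasi-Banach lattice over `ℝⁿ` containing simple
functions with `X ↪ L^{n/α,1}(ℝⁿ)` and `limsup_{t→∞} t^{-α/n} φ_X(t) < ∞`, then `L^∞(ℝⁿ)`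
is the optimal target for `(I_α, X, 𝒞)` with `𝒞` the Fatou-representable r.i.
quasi-Banach lattices. -/
theorem riesz_optimal_Linfty_target
    (n : ℕ) (γ : ℝ) (hγ0 : 0 < γ) (hγn : γ < n)
    (X : QBLattice (volume : Measure (EuclideanSpace ℝ (Fin n))))
    (hXri : X.RearrInv)
    (hXsimple : ∀ s : EuclideanSpace ℝ (Fin n) → ℝ,
      NestedSimple (volume : Measure (EuclideanSpace ℝ (Fin n))) s → X.N s < ⊤)
    (hXLp1 : ∃ C : ℝ≥0, ∀ f : EuclideanSpace ℝ (Fin n) → ℝ,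
      lorentzNorm (volume : Measure (EuclideanSpace ℝ (Fin n))) ((n : ℝ) / γ) 1 f
        ≤ C * X.N f)
    (hfund : Filter.limsup (fun t : ℝ≥0∞ => t ^ (-(γ / (n : ℝ))) * X.fund t)
      (nhdsWithin ⊤ (Set.Iio ⊤)) < ⊤) :
    (∃ C : ℝ≥0, ∀ f : EuclideanSpace ℝ (Fin n) → ℝ,
      linftyNorm (volume : Measure (EuclideanSpace ℝ (Fin n))) (riesz n γ f)
        ≤ C * X.N f) ∧
    ∀ Y : QBLattice (volume : Measure (EuclideanSpace ℝ (Fin n))),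
      Y.RearrInv → FatouRepresentable Y →
      (∃ C : ℝ≥0, ∀ f : EuclideanSpace ℝ (Fin n) → ℝ, Y.N (riesz n γ f) ≤ C * X.N f) →
      ∃ C : ℝ≥0, ∀ f : EuclideanSpace ℝ (Fin n) → ℝ,
        Y.N f ≤ C * linftyNorm volume f := by
  classical
  have hnR : (0:ℝ) < n := lt_trans hγ0 hγn
  have hn : 0 < n := by exact_mod_cast hnR
  haveI : Nonempty (Fin n) := ⟨⟨0, hn⟩⟩
  set cst : ℝ := Real.pi ^ ((n : ℝ) / 2) * 2 ^ γ * Real.Gamma (γ / 2) /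
    Real.Gamma (((n : ℝ) - γ) / 2) with hcstdef
  constructor
  · -- Part 1 : boundedness into L^∞
    obtain ⟨CL, hCL⟩ := hXLp1
    obtain ⟨c, hc, hker⟩ := RieszAux.lintegral_kernel_le hn hγ0 hγn
    set Etot : ℝ≥0∞ := ENNReal.ofReal |cst| * c * (ENNReal.ofReal ((n:ℝ)/γ))⁻¹ * CL
      with hEtotdef
    have hEtop : Etot ≠ ⊤ := by
      apply ENNReal.mul_ne_top
      apply ENNReal.mul_ne_top
      apply ENNReal.mul_ne_top ENNReal.ofReal_ne_top hc.ne
      · exact ENNReal.inv_ne_top.2 (ENNReal.ofReal_pos.2 (by positivity)).ne'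
      · exact ENNReal.coe_ne_top
    refine ⟨Etot.toNNReal + 1, ?_⟩
    intro f
    by_cases hfX : X.N f < ⊤
    swap
    · have hXtop : X.N f = ⊤ := by
        rw [← top_le_iff]
        exact not_lt.1 hfX
      rw [hXtop, ENNReal.mul_top (by simp)]
      exact le_top
    have hmeas := X.mem_aemeasurable f hfX
    set g := hmeas.mk f with hgdef
    have hfg : f =ᵐ[(volume : Measure (EuclideanSpace ℝ (Fin n)))] g := hmeas.ae_eq_mk
    have hgmeas : Measurable g := hmeas.measurable_mk
    have hriesz_eq : riesz n γ f = riesz n γ g := by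
      funext x
      rw [riesz, riesz]
      congr 1
      apply integral_congr_ae
      exact hfg.mono fun y hy => by simp only [hy]
    have hDeq : ∀ s : ℝ, volume {a | s < |f a|} = volume {a | s < |g a|} := by
      intro s
      apply measure_congr
      rw [Filter.eventuallyEq_set]
      exact hfg.mono fun a ha => by simp [ha]
    have hLor : lorentzNorm volume ((n:ℝ)/γ) 1 g = lorentzNorm volume ((n:ℝ)/γ) 1 f := by
      rw [RieszAux.lorentz_eq hn, RieszAux.lorentz_eq hn]
      congr 1
      exact lintegral_congr fun s => by rw [hDeq s]
    have ha0 : (ENNReal.ofReal ((n:ℝ)/γ)) ≠ 0 := (ENNReal.ofReal_pos.2 (by positivity)).ne'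
    have hchain : linftyNorm volume (riesz n γ f) ≤ Etot * X.N f := by
      rw [hriesz_eq, linftyNorm]
      apply essSup_le_of_ae_le
      apply Filter.Eventually.of_forall
      intro x
      calc (‖riesz n γ g x‖₊ : ℝ≥0∞)
          ≤ ENNReal.ofReal |cst| *
            ∫⁻ y, (‖g y‖₊ : ℝ≥0∞) * ENNReal.ofReal (‖x - y‖ ^ (γ - (n:ℝ))) ∂volume :=
            RieszAux.riesz_pointwise g x
        _ ≤ ENNReal.ofReal |cst| *
            (c * ∫⁻ s in Set.Ioi (0:ℝ), (volume {a | s < |g a|}) ^ (γ/(n:ℝ))) :=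
            mul_le_mul_right (hker g hgmeas x) _
        _ = ENNReal.ofReal |cst| * c * (ENNReal.ofReal ((n:ℝ)/γ))⁻¹ *
            (ENNReal.ofReal ((n:ℝ)/γ) *
              ∫⁻ s in Set.Ioi (0:ℝ), (volume {a | s < |g a|}) ^ (γ/(n:ℝ))) := by
            rw [mul_assoc (ENNReal.ofReal |cst| * c), ← mul_assoc (ENNReal.ofReal ((n:ℝ)/γ))⁻¹,
              ENNReal.inv_mul_cancel ha0 ENNReal.ofReal_ne_top, one_mul, ← mul_assoc]
        _ = ENNReal.ofReal |cst| * c * (ENNReal.ofReal ((n:ℝ)/γ))⁻¹ *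
            lorentzNorm volume ((n:ℝ)/γ) 1 f := by
            rw [← RieszAux.lorentz_eq hn, hLor]
        _ ≤ ENNReal.ofReal |cst| * c * (ENNReal.ofReal ((n:ℝ)/γ))⁻¹ * (CL * X.N f) :=
            mul_le_mul_right (hCL f) _
        _ = Etot * X.N f := by rw [hEtotdef]; ring
      isBoundedDefault
    refine le_trans hchain (mul_le_mul_left ?_ _)
    rw [← ENNReal.coe_toNNReal hEtop]
    exact_mod_cast le_self_add
  · -- Part 2 : optimality
    intro Y hYri hYrep hYbdd
    obtain ⟨Ybar, hYbarRI, ⟨CF, hCF0, hFatou⟩, hrep⟩ := hYrep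
    obtain ⟨CT, hCT⟩ := hYbdd
    -- extract the fundamental function bound
    have hM1 : Filter.limsup (fun t : ℝ≥0∞ => t ^ (-(γ / (n : ℝ))) * X.fund t)
        (nhdsWithin ⊤ (Set.Iio ⊤)) <
        Filter.limsup (fun t : ℝ≥0∞ => t ^ (-(γ / (n : ℝ))) * X.fund t)
        (nhdsWithin ⊤ (Set.Iio ⊤)) + 1 :=
      ENNReal.lt_add_right hfund.ne one_ne_zero
    set M : ℝ≥0∞ := Filter.limsup (fun t : ℝ≥0∞ => t ^ (-(γ / (n : ℝ))) * X.fund t)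
        (nhdsWithin ⊤ (Set.Iio ⊤)) + 1 with hMdef
    have hMfin : M < ⊤ := by
      rw [hMdef]
      exact ENNReal.add_lt_top.2 ⟨hfund, ENNReal.one_lt_top⟩
    have hev : ∀ᶠ t in nhdsWithin ⊤ (Set.Iio ⊤),
        t ^ (-(γ / (n : ℝ))) * X.fund t < M := Filter.eventually_lt_of_limsup_lt hM1
    rw [eventually_nhdsWithin_iff] at hev
    obtain ⟨a, ha, hsub⟩ := (ENNReal.nhds_top_basis.eventually_iff).1 hev
    have hfundB : ∀ t : ℝ≥0∞, a < t → t < ⊤ → X.fund t ≤ t ^ (γ/(n:ℝ)) * M := by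
      intro t hat htop
      have hlt := hsub (Set.mem_Ioi.2 hat) (Set.mem_Iio.2 htop)
      have ht0 : t ≠ 0 := fun h => by simp [h] at hat
      have h1 : t ^ (γ/(n:ℝ)) * (t ^ (-(γ/(n:ℝ))) * X.fund t) = X.fund t := by
        rw [← mul_assoc, ← ENNReal.rpow_add _ _ ht0 htop.ne, add_neg_cancel,
          ENNReal.rpow_zero, one_mul]
      rw [← h1]
      exact mul_le_mul_right hlt.le _
    obtain ⟨k₀', hk₀'⟩ := RieszAux.exists_ball_vol_gt hn a ha
    set k₀ : ℕ := max k₀' 1 with hk₀def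
    set R : ℕ → ℝ := fun k => ((k₀ + k : ℕ) : ℝ) with hRdef
    have hRpos : ∀ k, 0 < R k := by
      intro k
      have h1 : 1 ≤ k₀ := le_max_right _ _
      have h2 : 0 < k₀ + k := by omega
      show (0:ℝ) < ((k₀ + k : ℕ) : ℝ)
      exact_mod_cast h2
    set B : ℕ → Set (EuclideanSpace ℝ (Fin n)) := fun k =>
      Metric.ball (0 : EuclideanSpace ℝ (Fin n)) (R k) with hBdef
    set χ : ℕ → EuclideanSpace ℝ (Fin n) → ℝ := fun k =>
      (B k).indicator fun _ => (1:ℝ) with hχdef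
    have hvola : ∀ k, a < volume (B k) := by
      intro k
      have h1 : k₀' ≤ k₀ + k := le_trans (le_max_left _ _) (Nat.le_add_right _ _)
      exact hk₀' _ h1
    have hvoltop : ∀ k, volume (B k) < ⊤ := fun k => measure_ball_lt_top
    have hvolpos : ∀ k, 0 < volume (B k) := fun k => Metric.measure_ball_pos _ _ (hRpos k)
    have hnγ : (0:ℝ) < (n:ℝ) - γ := by linarith
    have hcst0 : 0 < cst := by
      rw [hcstdef]
      apply div_pos
      · apply mul_pos (mul_pos (Real.rpow_pos_of_pos Real.pi_pos _)
          (Real.rpow_pos_of_pos two_pos _))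
        exact Real.Gamma_pos_of_pos (by linarith)
      · exact Real.Gamma_pos_of_pos (by linarith)
    set V₁ : ℝ≥0∞ := volume (Metric.ball (0 : EuclideanSpace ℝ (Fin n)) 1) with hV₁def
    have hV₁0 : 0 < V₁ := Metric.measure_ball_pos _ _ one_pos
    have hV₁top : V₁ < ⊤ := measure_ball_lt_top
    have hV₁R : 0 < V₁.toReal := ENNReal.toReal_pos hV₁0.ne' hV₁top.ne
    set c₁ : ℕ → ℝ := fun k => cst * ((2 * R k) ^ (γ - (n:ℝ)) * (volume (B k)).toReal)
      with hc₁def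
    have hc₁pos : ∀ k, 0 < c₁ k := by
      intro k
      apply mul_pos hcst0
      apply mul_pos (Real.rpow_pos_of_pos (by linarith [hRpos k]) _)
      exact ENNReal.toReal_pos (hvolpos k).ne' (hvoltop k).ne
    set F : ℕ → EuclideanSpace ℝ (Fin n) → ℝ := fun k y => (c₁ k)⁻¹ * χ k y with hFdef
    have hlow : ∀ k, ∀ x ∈ B k, (1:ℝ) ≤ riesz n γ (F k) x := by
      intro k x hx
      have h1 : riesz n γ (F k) x = (c₁ k)⁻¹ * riesz n γ (χ k) x := by
        rw [riesz, riesz, ← hcstdef]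
        rw [show (c₁ k)⁻¹ * (cst * ∫ y, χ k y * ‖x - y‖ ^ (γ - (n:ℝ)))
            = cst * ((c₁ k)⁻¹ * ∫ y, χ k y * ‖x - y‖ ^ (γ - (n:ℝ))) by ring]
        congr 1
        rw [← integral_const_mul]
        congr 1
        funext y
        show F k y * ‖x - y‖ ^ (γ - (n:ℝ)) = (c₁ k)⁻¹ * (χ k y * ‖x - y‖ ^ (γ - (n:ℝ)))
        rw [hFdef]
        ring
      have h2 := RieszAux.riesz_indicator_lower hn hγ0 hγn (hRpos k) hx
      rw [h1]
      calc (1:ℝ) = (c₁ k)⁻¹ * c₁ k := (inv_mul_cancel₀ (hc₁pos k).ne').symm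
        _ ≤ (c₁ k)⁻¹ * riesz n γ (χ k) x := by
            apply mul_le_mul_of_nonneg_left _ (inv_nonneg.2 (hc₁pos k).le)
            exact h2
    have hχX : ∀ k, X.N (χ k) < ⊤ := fun k =>
      hXsimple _ (RieszAux.nestedSimple_indicator measurableSet_ball (hvoltop k))
    set κ : ℝ := (cst * (2:ℝ) ^ (γ-(n:ℝ)) * V₁.toReal)⁻¹ with hκdef
    set M' : ℝ≥0∞ := ENNReal.ofReal κ * (V₁ ^ (γ/(n:ℝ)) * M) with hM'def
    have hM'fin : M' < ⊤ := by
      apply ENNReal.mul_lt_top ENNReal.ofReal_lt_top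
      apply ENNReal.mul_lt_top _ hMfin
      exact ENNReal.rpow_lt_top_of_nonneg (by positivity) hV₁top.ne
    have hXF : ∀ k, X.N (F k) ≤ M' := by
      intro k
      have hRk := hRpos k
      have hsmul : X.N (F k) = ENNReal.ofReal ((c₁ k)⁻¹) * X.N (χ k) := by
        have hs := X.smul ((c₁ k)⁻¹) (χ k) (hχX k)
        rw [abs_of_pos (inv_pos.2 (hc₁pos k))] at hs
        exact hs
      have hfund_eq : X.N (χ k) = X.fund (volume (B k)) :=
        (RieszAux.fund_eq X hXri measurableSet_ball).symm
      have hfle : X.fund (volume (B k)) ≤ (volume (B k)) ^ (γ/(n:ℝ)) * M :=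
        hfundB _ (hvola k) (hvoltop k)
      have hvolpow : (volume (B k)) ^ (γ/(n:ℝ))
          = ENNReal.ofReal ((R k) ^ γ) * V₁ ^ (γ/(n:ℝ)) := by
        rw [hBdef]
        rw [RieszAux.vol_ball hn _ hRk.le, ENNReal.mul_rpow_of_nonneg _ _ (by positivity)]
        congr 1
        rw [ENNReal.ofReal_rpow_of_pos (pow_pos hRk n)]
        congr 1
        rw [← Real.rpow_natCast (R k) n, ← Real.rpow_mul hRk.le]
        congr 1
        field_simp
      have hc₁eq : c₁ k = (cst * (2:ℝ)^(γ-(n:ℝ)) * V₁.toReal) * (R k) ^ γ := by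
        have hvol : (volume (B k)).toReal = (R k) ^ (n:ℕ) * V₁.toReal := by
          rw [hBdef, RieszAux.vol_ball hn _ hRk.le, ENNReal.toReal_mul,
            ENNReal.toReal_ofReal (by positivity)]
        have hRR : (R k) ^ (γ - (n:ℝ)) * (R k) ^ ((n:ℕ):ℝ) = (R k) ^ γ := by
          rw [← Real.rpow_add hRk]
          norm_num
        calc c₁ k = cst * ((2:ℝ)^(γ-(n:ℝ)) * (R k)^(γ-(n:ℝ)) *
            ((R k) ^ (n:ℕ) * V₁.toReal)) := by
              show cst * ((2 * R k) ^ (γ - (n:ℝ)) * (volume (B k)).toReal) = _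
              rw [hvol, Real.mul_rpow two_pos.le hRk.le]
          _ = cst * (2:ℝ)^(γ-(n:ℝ)) * V₁.toReal *
              ((R k)^(γ-(n:ℝ)) * (R k) ^ ((n:ℕ):ℝ)) := by
              rw [Real.rpow_natCast]
              ring
          _ = (cst * (2:ℝ)^(γ-(n:ℝ)) * V₁.toReal) * (R k) ^ γ := by rw [hRR]
      have hinv : ENNReal.ofReal ((c₁ k)⁻¹) * ENNReal.ofReal ((R k) ^ γ)
          = ENNReal.ofReal κ := by
        rw [← ENNReal.ofReal_mul (by positivity), hc₁eq, hκdef]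
        congr 1
        have hRγ : (0:ℝ) < (R k) ^ γ := Real.rpow_pos_of_pos hRk _
        field_simp
      calc X.N (F k) = ENNReal.ofReal ((c₁ k)⁻¹) * X.N (χ k) := hsmul
        _ = ENNReal.ofReal ((c₁ k)⁻¹) * X.fund (volume (B k)) := by rw [hfund_eq]
        _ ≤ ENNReal.ofReal ((c₁ k)⁻¹) * ((volume (B k)) ^ (γ/(n:ℝ)) * M) :=
            mul_le_mul_right hfle _
        _ = (ENNReal.ofReal ((c₁ k)⁻¹) * ENNReal.ofReal ((R k)^γ)) *
            (V₁ ^ (γ/(n:ℝ)) * M) := by rw [hvolpow]; ring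
        _ = M' := by rw [hinv, hM'def]
    have hYχ : ∀ k, Y.N (χ k) ≤ CT * M' := by
      intro k
      have hlat : Y.N (χ k) ≤ Y.N (riesz n γ (F k)) := by
        apply Y.lattice
        · exact (measurable_const.indicator measurableSet_ball).aemeasurable
        · apply Filter.Eventually.of_forall
          intro y
          by_cases hy : y ∈ B k
          · have h1 := hlow k y hy
            rw [hχdef]
            simp only [Set.indicator_of_mem hy]
            rw [abs_one]
            exact le_trans h1 (le_abs_self _)
          · rw [hχdef]
            simp only [Set.indicator_of_notMem hy]
            rw [abs_zero]
            exact abs_nonneg _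
      exact le_trans hlat (le_trans (hCT (F k)) (mul_le_mul_right (hXF k) _))
    -- Fatou argument
    set one : ℝ → ℝ := fun _ => (1:ℝ) with honedef
    set G : ℕ → ℝ → ℝ := fun k => rearrFun volume (χ k) with hGdef
    have hGform : ∀ k t, G k t = if ENNReal.ofReal t < volume (B k) then 1 else 0 :=
      fun k t => RieszAux.rearrFun_indicator (B k) t
    have hiff : ∀ (k : ℕ) (t : ℝ),
        (ENNReal.ofReal t < volume (B k) ↔ t < (volume (B k)).toReal) := by
      intro k t
      rcases le_or_gt 0 t with h | h
      · rw [ENNReal.ofReal_lt_iff_lt_toReal h (hvoltop k).ne]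
      · constructor
        · intro _
          exact lt_of_lt_of_le h ENNReal.toReal_nonneg
        · intro _
          rw [ENNReal.ofReal_of_nonpos h.le]
          exact hvolpos k
    have hGmeas : ∀ k, AEMeasurable (G k)
        (intervalM (volume (Set.univ : Set (EuclideanSpace ℝ (Fin n))))) := by
      intro k
      have hGind : G k = (Set.Iio ((volume (B k)).toReal)).indicator (fun _ => (1:ℝ)) := by
        funext t
        rw [hGform k t]
        by_cases h : t < (volume (B k)).toReal
        · rw [if_pos ((hiff k t).2 h)]
          exact (Set.indicator_of_mem (Set.mem_Iio.mpr h) (fun _ => (1:ℝ))).symm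
        · rw [if_neg (fun hc => h ((hiff k t).1 hc))]
          exact (Set.indicator_of_notMem
            (show t ∉ Set.Iio ((volume (B k)).toReal) from fun hc => h hc)
            (fun _ => (1:ℝ))).symm
      rw [hGind]
      exact (measurable_const.indicator measurableSet_Iio).aemeasurable
    have hGmono : ∀ k, ∀ᵐ t ∂(intervalM (volume (Set.univ : Set (EuclideanSpace ℝ (Fin n))))),
        0 ≤ G k t ∧ G k t ≤ G (k+1) t := by
      intro k
      apply Filter.Eventually.of_forall
      intro t
      rw [hGform, hGform]
      constructor
      · split_ifs <;> norm_num
      · have hmono : volume (B k) ≤ volume (B (k+1)) := by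
          apply measure_mono
          apply Metric.ball_subset_ball
          show ((k₀ + k : ℕ):ℝ) ≤ ((k₀ + (k+1) : ℕ):ℝ)
          exact_mod_cast (by omega : k₀ + k ≤ k₀ + (k+1))
        split_ifs with h1 h2
        · exact le_refl _
        · exact absurd (lt_of_lt_of_le h1 hmono) h2
        · norm_num
        · exact le_refl _
    have hGlim : ∀ᵐ t ∂(intervalM (volume (Set.univ : Set (EuclideanSpace ℝ (Fin n))))),
        Tendsto (fun k => G k t) atTop (nhds (one t)) := by
      apply Filter.Eventually.of_forall
      intro t
      obtain ⟨k₁, hk₁⟩ := RieszAux.exists_ball_vol_gt hn (ENNReal.ofReal t)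
        ENNReal.ofReal_lt_top
      apply Filter.Tendsto.congr' _ tendsto_const_nhds
      filter_upwards [Filter.eventually_ge_atTop k₁] with k hk
      have h1 : ENNReal.ofReal t <
          volume (Metric.ball (0 : EuclideanSpace ℝ (Fin n)) ((k:ℕ):ℝ)) := hk₁ k hk
      have h2 : volume (Metric.ball (0 : EuclideanSpace ℝ (Fin n)) ((k:ℕ):ℝ))
          ≤ volume (B k) := by
        apply measure_mono
        apply Metric.ball_subset_ball
        show ((k:ℕ):ℝ) ≤ ((k₀ + k : ℕ):ℝ)
        exact_mod_cast Nat.le_add_left k k₀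
      rw [hGform, if_pos (lt_of_lt_of_le h1 h2)]
    have hsupfin : (⨆ k, Ybar.N (G k)) < ⊤ := by
      apply lt_of_le_of_lt (iSup_le fun k => ?_)
        (show (CT : ℝ≥0∞) * M' < ⊤ from ENNReal.mul_lt_top ENNReal.coe_lt_top hM'fin)
      rw [hGdef]
      show Ybar.N (rearrFun volume (χ k)) ≤ _
      rw [← hrep (χ k)]
      exact hYχ k
    have hone := hFatou G one hGmeas hGmono hGlim hsupfin
    have honefin : Ybar.N one < ⊤ :=
      lt_of_le_of_lt hone (ENNReal.mul_lt_top ENNReal.coe_lt_top hsupfin)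
    refine ⟨1 + (Ybar.N one).toNNReal, ?_⟩
    intro f
    rcases eq_or_ne (linftyNorm volume f) ⊤ with hL | hL
    · rw [hL, ENNReal.mul_top (by simp)]
      exact le_top
    · have hbound : ∀ t : ℝ, rearrFun volume f t ≤ (linftyNorm volume f).toReal := by
        intro t
        exact ENNReal.toReal_mono hL (RieszAux.rearr_le_linfty volume f _)
      have hnonneg : ∀ t, 0 ≤ rearrFun volume f t := fun t => ENNReal.toReal_nonneg
      have hlat : Ybar.N (rearrFun volume f)
          ≤ Ybar.N (fun t => (linftyNorm volume f).toReal * one t) := by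
        apply Ybar.lattice
        · exact (RieszAux.rearrFun_measurable volume f).aemeasurable
        · apply Filter.Eventually.of_forall
          intro t
          rw [abs_of_nonneg (hnonneg t), honedef]
          simp only [mul_one]
          rw [abs_of_nonneg ENNReal.toReal_nonneg]
          exact hbound t
      have hsm : Ybar.N (fun t => (linftyNorm volume f).toReal * one t)
          = ENNReal.ofReal |(linftyNorm volume f).toReal| * Ybar.N one :=
        Ybar.smul _ one honefin
      calc Y.N f = Ybar.N (rearrFun volume f) := hrep f
        _ ≤ ENNReal.ofReal |(linftyNorm volume f).toReal| * Ybar.N one :=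
            hlat.trans (le_of_eq hsm)
        _ = linftyNorm volume f * Ybar.N one := by
            rw [abs_of_nonneg ENNReal.toReal_nonneg, ENNReal.ofReal_toReal hL]
        _ ≤ linftyNorm volume f * ((1 + (Ybar.N one).toNNReal : ℝ≥0) : ℝ≥0∞) := by
            apply mul_le_mul_right
            push_cast
            rw [ENNReal.coe_toNNReal honefin.ne]
            exact le_add_self
        _ = ((1 + (Ybar.N one).toNNReal : ℝ≥0) : ℝ≥0∞) * linftyNorm volume f :=
            mul_comm _ _
end
end
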